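/- arXiv:2402.02019 — 7 statements merged into one kernel-verified Lean document; each statement's English description precedes it below -/
import Mathlib

section
/- Let f, g : ℝ^m × ℝ^n → ℝ with f continuously differentiable and g twice continuously differentiable. Suppose μ > 0 and for every x the map y ↦ g(x,y) is μ-strongly convex with unique minimizer y*(x), and the map y* : ℝ^m → ℝ^n is differentiable. Set Φ(x) := f(x, y*(x)). Then for every x, ∇Φ(x) = ∇_x f(x, y*(x)) − (∇²_{xy} g(x, y*(x)))* v*(x), where v*(x) ∈ ℝ^n is the unique solution of ∇²_{yy} g(x, y*(x)) v = ∇_y f(x, y*(x)), and (∇²_{xy} g)* : ℝ^n → ℝ^m denotes the adjoint of the cross-derivative ∇²_{xy} g(x,y). -/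
open InnerProductSpace

noncomputable section HGAux

variable {E F G : Type*}
  [NormedAddCommGroup E] [NormedSpace ℝ E]
  [NormedAddCommGroup F] [NormedSpace ℝ F]
  [NormedAddCommGroup G] [NormedSpace ℝ G]

theorem hg_fderiv_partial_fst {f : E × F → G} {p : E × F}
    (hf : DifferentiableAt ℝ f p) :
    fderiv ℝ (fun x => f (x, p.2)) p.1 = (fderiv ℝ f p).comp (.inl ℝ E F) :=
  (hf.hasFDerivAt.comp p.1 (hasFDerivAt_prodMk_left p.1 p.2)).fderiv

theorem hg_fderiv_partial_snd {f : E × F → G} {p : E × F}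
    (hf : DifferentiableAt ℝ f p) :
    fderiv ℝ (fun y => f (p.1, y)) p.2 = (fderiv ℝ f p).comp (.inr ℝ E F) :=
  (hf.hasFDerivAt.comp p.2 (hasFDerivAt_prodMk_right p.1 p.2)).fderiv

theorem hg_inner_gradient {F : Type*} [NormedAddCommGroup F] [InnerProductSpace ℝ F]
    [CompleteSpace F] (f : F → ℝ) (x v : F) :
    (inner ℝ (gradient f x) v : ℝ) = fderiv ℝ f x v :=
  InnerProductSpace.toDual_symm_apply

end HGAux



/-- Partial gradient in the first (x) variable of a function on a product of
Euclidean spaces. -/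
noncomputable def gradx {m n : ℕ}
    (f : EuclideanSpace ℝ (Fin m) × EuclideanSpace ℝ (Fin n) → ℝ)
    (p : EuclideanSpace ℝ (Fin m) × EuclideanSpace ℝ (Fin n)) :
    EuclideanSpace ℝ (Fin m) :=
  gradient (fun x => f (x, p.2)) p.1

/-- Partial gradient in the second (y) variable. -/
noncomputable def grady {m n : ℕ}
    (f : EuclideanSpace ℝ (Fin m) × EuclideanSpace ℝ (Fin n) → ℝ)
    (p : EuclideanSpace ℝ (Fin m) × EuclideanSpace ℝ (Fin n)) :
    EuclideanSpace ℝ (Fin n) :=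
  gradient (fun y => f (p.1, y)) p.2

/-- Cross second derivative ∇²_{xy} f(x,y) : ℝ^m →L ℝ^n, the derivative in x of
the map x ↦ ∇_y f(x,y). -/
noncomputable def crossxy {m n : ℕ}
    (f : EuclideanSpace ℝ (Fin m) × EuclideanSpace ℝ (Fin n) → ℝ)
    (p : EuclideanSpace ℝ (Fin m) × EuclideanSpace ℝ (Fin n)) :
    EuclideanSpace ℝ (Fin m) →L[ℝ] EuclideanSpace ℝ (Fin n) :=
  fderiv ℝ (fun x => grady f (x, p.2)) p.1

/-- Hessian in y: ∇²_{yy} f(x,y) : ℝ^n →L ℝ^n, the derivative in y of the map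
y ↦ ∇_y f(x,y). -/
noncomputable def hessyy {m n : ℕ}
    (f : EuclideanSpace ℝ (Fin m) × EuclideanSpace ℝ (Fin n) → ℝ)
    (p : EuclideanSpace ℝ (Fin m) × EuclideanSpace ℝ (Fin n)) :
    EuclideanSpace ℝ (Fin n) →L[ℝ] EuclideanSpace ℝ (Fin n) :=
  fderiv ℝ (fun y => grady f (p.1, y)) p.2

set_option maxHeartbeats 1000000 in
/-- hypergradient formula
∇Φ(x) = ∇_x f(x,y*(x)) − (∇²_{xy} g(x,y*(x)))* v*(x), where v*(x) solves
∇²_{yy} g(x,y*(x)) v = ∇_y f(x,y*(x)). -/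
theorem statement_0 {m n : ℕ}
    (f g : EuclideanSpace ℝ (Fin m) × EuclideanSpace ℝ (Fin n) → ℝ)
    (μ : ℝ) (hμ : 0 < μ)
    (hf : ContDiff ℝ 1 f) (hg : ContDiff ℝ 2 g)
    (ystar : EuclideanSpace ℝ (Fin m) → EuclideanSpace ℝ (Fin n))
    -- μ-strong convexity of y ↦ g(x,y): g(x,·) − (μ/2)‖·‖² is convex
    (hsc : ∀ x, ConvexOn ℝ Set.univ (fun y => g (x, y) - μ / 2 * ‖y‖ ^ 2))
    -- y*(x) is the unique minimizer of y ↦ g(x,y)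
    (hmin : ∀ x y, g (x, ystar x) ≤ g (x, y))
    (huniq : ∀ x y, (∀ z, g (x, y) ≤ g (x, z)) → y = ystar x)
    (hystar : Differentiable ℝ ystar)
    (Φ : EuclideanSpace ℝ (Fin m) → ℝ)
    (hΦ : ∀ x, Φ x = f (x, ystar x))
    -- v*(x) is the (unique) solution of ∇²_{yy} g(x,y*(x)) v = ∇_y f(x,y*(x))
    (vstar : EuclideanSpace ℝ (Fin m) → EuclideanSpace ℝ (Fin n))
    (hv : ∀ x, hessyy g (x, ystar x) (vstar x) = grady f (x, ystar x)) :
    ∀ x, gradient Φ x =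
      gradx f (x, ystar x) -
        (ContinuousLinearMap.adjoint (crossxy g (x, ystar x))) (vstar x) := by
  intro x
  have hfd : Differentiable ℝ f := hf.differentiable one_ne_zero
  have hgd : Differentiable ℝ g := hg.differentiable two_ne_zero
  set p : EuclideanSpace ℝ (Fin m) × EuclideanSpace ℝ (Fin n) := (x, ystar x) with hp
  set T := InnerProductSpace.toDual ℝ (EuclideanSpace ℝ (Fin n)) with hT
  -- Smooth formula for grady g
  set A : ((EuclideanSpace ℝ (Fin m) × EuclideanSpace ℝ (Fin n)) →L[ℝ] ℝ)
      →L[ℝ] EuclideanSpace ℝ (Fin n) :=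
    (T.symm.toContinuousLinearEquiv.toContinuousLinearMap).comp
      ((ContinuousLinearMap.compL ℝ (EuclideanSpace ℝ (Fin n))
        (EuclideanSpace ℝ (Fin m) × EuclideanSpace ℝ (Fin n)) ℝ).flip
        (.inr ℝ _ _)) with hA
  set G : EuclideanSpace ℝ (Fin m) × EuclideanSpace ℝ (Fin n) →
      EuclideanSpace ℝ (Fin n) := fun q => A (fderiv ℝ g q) with hGdef
  have hAapp : ∀ L, A L = T.symm (L.comp (.inr ℝ _ _)) := fun L => rfl
  have hGg : ∀ q, grady g q = G q := by
    intro q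
    show T.symm (fderiv ℝ (fun y => g (q.1, y)) q.2) = _
    rw [hg_fderiv_partial_snd (hgd q)]
    rfl
  have hfderiv1 : ContDiff ℝ 1 (fderiv ℝ g) := hg.fderiv_right (by norm_num)
  have hGdiff : Differentiable ℝ G :=
    A.differentiable.comp (hfderiv1.differentiable one_ne_zero)
  -- cross and hess as restrictions of the total derivative of G
  have hCross : crossxy g p = (fderiv ℝ G p).comp (.inl ℝ _ _) := by
    show fderiv ℝ (fun x' => grady g (x', p.2)) p.1 = _
    simp only [hGg]
    exact hg_fderiv_partial_fst (hGdiff p)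
  have hHess : hessyy g p = (fderiv ℝ G p).comp (.inr ℝ _ _) := by
    show fderiv ℝ (fun y => grady g (p.1, y)) p.2 = _
    simp only [hGg]
    exact hg_fderiv_partial_snd (hGdiff p)
  -- first-order optimality
  have hfoc : ∀ x', G (x', ystar x') = 0 := by
    intro x'
    rw [← hGg]
    show T.symm (fderiv ℝ (fun y => g (x', y)) (ystar x')) = 0
    have hloc : IsLocalMin (fun y => g (x', y)) (ystar x') :=
      Filter.Eventually.of_forall fun y => hmin x' y
    rw [hloc.fderiv_eq_zero, map_zero]
  -- implicit differentiation
  set D := fderiv ℝ ystar x with hD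
  have hinner : HasFDerivAt (fun x' => (x', ystar x'))
      ((ContinuousLinearMap.id ℝ (EuclideanSpace ℝ (Fin m))).prod D) x :=
    (hasFDerivAt_id x).prodMk (hystar x).hasFDerivAt
  have hKey : ∀ u, hessyy g p (D u) = - crossxy g p u := by
    have hcomp : HasFDerivAt (fun x' => G (x', ystar x'))
        ((fderiv ℝ G p).comp ((ContinuousLinearMap.id ℝ (EuclideanSpace ℝ (Fin m))).prod D)) x :=
      ((hGdiff p).hasFDerivAt.comp x hinner :
        HasFDerivAt (G ∘ fun x' => (x', ystar x')) _ x)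
    have hzero : (fun x' => G (x', ystar x')) = fun _ => (0 :
        EuclideanSpace ℝ (Fin n)) := funext hfoc
    have hconst : HasFDerivAt (fun x' => G (x', ystar x'))
        (0 : EuclideanSpace ℝ (Fin m) →L[ℝ] EuclideanSpace ℝ (Fin n)) x := by
      rw [hzero]; exact hasFDerivAt_const _ _
    have h0 : (fderiv ℝ G p).comp ((ContinuousLinearMap.id ℝ (EuclideanSpace ℝ (Fin m))).prod D) = 0 :=
      hcomp.unique hconst
    intro u
    have h1 : fderiv ℝ G p (u, D u) = 0 := by
      have := congrArg (fun (L : EuclideanSpace ℝ (Fin m) →L[ℝ]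
        EuclideanSpace ℝ (Fin n)) => L u) h0
      simpa using this
    have h2 : ((u, D u) : EuclideanSpace ℝ (Fin m) × EuclideanSpace ℝ (Fin n))
        = (u, 0) + (0, D u) := by simp
    rw [hCross, hHess]
    simp only [ContinuousLinearMap.comp_apply, ContinuousLinearMap.inl_apply,
      ContinuousLinearMap.inr_apply]
    rw [h2, map_add] at h1
    exact eq_neg_of_add_eq_zero_left (by rw [add_comm]; exact h1)
  -- symmetry of the Hessian
  set h : EuclideanSpace ℝ (Fin n) → ℝ := fun y => g (x, y) with hhdef
  have hh : ContDiff ℝ 2 h := hg.comp (contDiff_const.prodMk contDiff_id)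
  have hh1 : ContDiff ℝ 1 (fderiv ℝ h) := hh.fderiv_right (by norm_num)
  set h'' := fderiv ℝ (fderiv ℝ h) (ystar x) with hh''def
  have h2d : HasFDerivAt (fderiv ℝ h) h'' (ystar x) :=
    ((hh1.differentiable one_ne_zero) (ystar x)).hasFDerivAt
  have hsymm : ∀ v w, h'' v w = h'' w v := by
    intro v w
    exact hh.contDiffAt.isSymmSndFDerivAt (by simp) v w
  set Bn : StrongDual ℝ (EuclideanSpace ℝ (Fin n)) →L[ℝ]
      EuclideanSpace ℝ (Fin n) :=
    T.symm.toContinuousLinearEquiv.toContinuousLinearMap with hBn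
  have hBnInner : ∀ (L : StrongDual ℝ (EuclideanSpace ℝ (Fin n)))
      (w : EuclideanSpace ℝ (Fin n)), (inner ℝ (Bn L) w : ℝ) = L w := by
    intro L w
    exact InnerProductSpace.toDual_symm_apply
  have heq : (fun y => grady g (p.1, y)) = fun y => Bn (fderiv ℝ h y) := rfl
  have hHessEq : hessyy g p = Bn.comp h'' := by
    show fderiv ℝ (fun y => grady g (p.1, y)) p.2 = _
    rw [heq]
    exact (Bn.hasFDerivAt.comp (ystar x) h2d).fderiv
  have hHsa : ∀ v w : EuclideanSpace ℝ (Fin n),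
      (inner ℝ (hessyy g p v) w : ℝ) = inner ℝ v (hessyy g p w) := by
    intro v w
    rw [hHessEq]
    simp only [ContinuousLinearMap.comp_apply]
    rw [hBnInner, hsymm, ← hBnInner (h'' w) v, real_inner_comm]
  -- final assembly
  apply ext_inner_right ℝ
  intro u
  have hΦfun : Φ = fun x' => f (x', ystar x') := funext hΦ
  have hDΦ : HasFDerivAt Φ
      ((fderiv ℝ f p).comp
        ((ContinuousLinearMap.id ℝ (EuclideanSpace ℝ (Fin m))).prod D)) x := by
    rw [hΦfun]
    exact (hfd p).hasFDerivAt.comp x hinner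
  have lhs1 : (inner ℝ (gradient Φ x) u : ℝ)
      = fderiv ℝ f p (u, 0) + fderiv ℝ f p (0, D u) := by
    rw [hg_inner_gradient, hDΦ.fderiv]
    simp only [ContinuousLinearMap.comp_apply, ContinuousLinearMap.prod_apply,
      ContinuousLinearMap.coe_id', id_eq]
    rw [show ((u, D u) : EuclideanSpace ℝ (Fin m) × EuclideanSpace ℝ (Fin n))
      = (u, 0) + (0, D u) by simp, map_add]
  have hgx : (inner ℝ (gradx f p) u : ℝ) = fderiv ℝ f p (u, 0) := by
    show (inner ℝ (gradient (fun x' => f (x', p.2)) p.1) u : ℝ) = _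
    rw [hg_inner_gradient, hg_fderiv_partial_fst (hfd p)]
    simp
  have hgy : ∀ v, (inner ℝ (grady f p) v : ℝ) = fderiv ℝ f p (0, v) := by
    intro v
    show (inner ℝ (gradient (fun y => f (p.1, y)) p.2) v : ℝ) = _
    rw [hg_inner_gradient, hg_fderiv_partial_snd (hfd p)]
    simp
  have hvp : hessyy g p (vstar x) = grady f p := hv x
  have hcv : fderiv ℝ f p (0, D u)
      = - (inner ℝ (ContinuousLinearMap.adjoint (crossxy g p) (vstar x)) u : ℝ) := by
    rw [← hgy (D u), ← hvp, hHsa, hKey u, inner_neg_right,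
      ContinuousLinearMap.adjoint_inner_left]
  have rhs1 : (inner ℝ (gradx f p
      - ContinuousLinearMap.adjoint (crossxy g p) (vstar x)) u : ℝ)
      = inner ℝ (gradx f p) u
        - (inner ℝ (ContinuousLinearMap.adjoint (crossxy g p) (vstar x)) u : ℝ) :=
    inner_sub_left _ _ _
  rw [lhs1, rhs1, hgx, hcv]
  ring
end

section
/- Let g : ℝ^m × ℝ^n → ℝ be differentiable, μ > 0, ℓ_{g,1} > 0. Suppose for every x the map y ↦ g(x,y) is μ-strongly convex with unique minimizer y*(x), and the full gradient ∇g : ℝ^m × ℝ^n → ℝ^m × ℝ^n is ℓ_{g,1}-Lipschitz. Then the solution map y* : ℝ^m → ℝ^n is κ-Lipschitz with κ = ℓ_{g,1}/μ: for all x, x', ‖y*(x) − y*(x')‖ ≤ (ℓ_{g,1}/μ)‖x − x'‖. -/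

private lemma first_order_aux {E : Type*} [NormedAddCommGroup E] [InnerProductSpace ℝ E]
    {h : E → ℝ} (hd : Differentiable ℝ h) (hc : ConvexOn ℝ Set.univ h) (a b : E) :
    fderiv ℝ h b (a - b) ≤ h a - h b := by
  have hline : ∀ t : ℝ, HasDerivAt (fun t : ℝ => h (b + t • (a - b)))
      (fderiv ℝ h (b + t • (a - b)) (a - b)) t := by
    intro t
    have h1 : HasDerivAt (fun t : ℝ => b + t • (a - b)) (a - b) t := by
      simpa using ((hasDerivAt_id t).smul_const (a - b)).const_add b
    exact (hd _).hasFDerivAt.comp_hasDerivAt t h1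
  have hconv : ConvexOn ℝ Set.univ (fun t : ℝ => h (b + t • (a - b))) := by
    have h2 := hc.comp_affineMap (AffineMap.lineMap b a : ℝ →ᵃ[ℝ] E)
    have hs : (AffineMap.lineMap b a : ℝ →ᵃ[ℝ] E) ⁻¹' Set.univ = Set.univ := by simp
    have hf : (fun t : ℝ => h (b + t • (a - b))) = h ∘ (AffineMap.lineMap b a : ℝ →ᵃ[ℝ] E) := by
      ext t; simp [AffineMap.lineMap_apply, add_comm]
    rw [hf]; rw [hs] at h2; exact h2
  have hle := hconv.le_slope_of_hasDerivAt (Set.mem_univ (0:ℝ)) (Set.mem_univ (1:ℝ)) one_pos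
      (by simpa using hline 0)
  simpa [slope_def_field] using hle

/-- the solution map y* is (ℓ_{g,1}/μ)-Lipschitz.
The full gradient ∇g(x,y) = (∇_x g, ∇_y g) is Lipschitz with respect to the
product norm ‖(u,v)‖ = √(‖u‖² + ‖v‖²). -/
theorem statement_2 {m n : ℕ}
    (g : EuclideanSpace ℝ (Fin m) × EuclideanSpace ℝ (Fin n) → ℝ)
    (μ ℓg1 : ℝ) (hμ : 0 < μ) (hℓg1 : 0 < ℓg1)
    (hg : Differentiable ℝ g)
    (ystar : EuclideanSpace ℝ (Fin m) → EuclideanSpace ℝ (Fin n))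
    -- μ-strong convexity of y ↦ g(x,y): g(x,·) − (μ/2)‖·‖² is convex
    (hsc : ∀ x, ConvexOn ℝ Set.univ (fun y => g (x, y) - μ / 2 * ‖y‖ ^ 2))
    -- y*(x) is the unique minimizer of y ↦ g(x,y)
    (hmin : ∀ x y, g (x, ystar x) ≤ g (x, y))
    (huniq : ∀ x y, (∀ z, g (x, y) ≤ g (x, z)) → y = ystar x)
    -- ∇g is ℓ_{g,1}-Lipschitz in the joint variable
    (hglip : ∀ p q : EuclideanSpace ℝ (Fin m) × EuclideanSpace ℝ (Fin n),
      Real.sqrt (‖gradx g p - gradx g q‖ ^ 2 + ‖grady g p - grady g q‖ ^ 2)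
        ≤ ℓg1 * Real.sqrt (‖p.1 - q.1‖ ^ 2 + ‖p.2 - q.2‖ ^ 2)) :
    ∀ x x', ‖ystar x - ystar x'‖ ≤ (ℓg1 / μ) * ‖x - x'‖ := by

  intro x x'
  set a := ystar x with ha
  set b := ystar x' with hb
  have hdiffy : ∀ u : EuclideanSpace ℝ (Fin m), Differentiable ℝ (fun y => g (u, y)) :=
    fun u => hg.comp ((differentiable_const u).prodMk differentiable_id)
  have hfz : ∀ u, fderiv ℝ (fun y => g (u, y)) (ystar u) = 0 := by
    intro u
    have hl : IsLocalMin (fun y => g (u, y)) (ystar u) :=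
      Filter.Eventually.of_forall (hmin u)
    exact hl.fderiv_eq_zero
  have hgz : ∀ u, grady g (u, ystar u) = 0 := by
    intro u
    show gradient (fun y => g (u, y)) (ystar u) = 0
    unfold gradient
    rw [hfz u]; simp
  have hfi : ∀ (u : EuclideanSpace ℝ (Fin m)) (y v : EuclideanSpace ℝ (Fin n)),
      fderiv ℝ (fun z => g (u, z)) y v = @inner ℝ _ _ (grady g (u, y)) v := by
    intro u y v
    show _ = @inner ℝ _ _ (gradient (fun z => g (u, z)) y) v
    unfold gradient
    rw [← InnerProductSpace.toDual_apply_apply, LinearIsometryEquiv.apply_symm_apply]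
  have hderivh : ∀ (u : EuclideanSpace ℝ (Fin m)) (y : EuclideanSpace ℝ (Fin n)),
      HasFDerivAt (fun z => g (u, z) - μ / 2 * ‖z‖ ^ 2)
        (fderiv ℝ (fun z => g (u, z)) y - μ • (innerSL ℝ y)) y := by
    intro u y
    have h1 : HasFDerivAt (fun z : EuclideanSpace ℝ (Fin n) => μ / 2 * ‖z‖ ^ 2)
        (μ • innerSL ℝ y) y := by
      have h2 := (hasStrictFDerivAt_norm_sq y).hasFDerivAt.const_mul (μ / 2)
      refine h2.congr_fderiv ?_
      ext v
      simp only [ContinuousLinearMap.smul_apply, smul_eq_mul, nsmul_eq_mul]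
      ring
    exact ((hdiffy u y).hasFDerivAt).sub h1
  have hdh : Differentiable ℝ (fun z : EuclideanSpace ℝ (Fin n) => g (x, z) - μ / 2 * ‖z‖ ^ 2) :=
    fun y => (hderivh x y).differentiableAt
  have hfo1 := first_order_aux hdh (hsc x) a b
  have hfo2 := first_order_aux hdh (hsc x) b a
  rw [(hderivh x b).fderiv] at hfo1
  rw [(hderivh x a).fderiv] at hfo2
  simp only [ContinuousLinearMap.sub_apply, ContinuousLinearMap.smul_apply,
    innerSL_apply_apply, smul_eq_mul, hfi] at hfo1 hfo2
  have hza : grady g (x, a) = 0 := hgz x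
  rw [hza] at hfo2
  simp only [inner_zero_left] at hfo2
  set G := grady g (x, b) with hG
  set Δ := a - b with hΔ
  have key : μ * ‖Δ‖ ^ 2 ≤ -(@inner ℝ _ _ G Δ) := by
    have e1 : @inner ℝ _ _ a (b - a) = -(@inner ℝ _ _ a Δ) := by
      rw [hΔ, ← inner_neg_right]; congr 1; abel
    have e3 : @inner ℝ _ _ a Δ - @inner ℝ _ _ b Δ = ‖Δ‖ ^ 2 := by
      rw [← inner_sub_left, ← hΔ, real_inner_self_eq_norm_sq]
    nlinarith [hfo1, hfo2, e1, e3]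
  have hGD : -(@inner ℝ _ _ G Δ) ≤ ‖G‖ * ‖Δ‖ := by
    have := abs_real_inner_le_norm G Δ
    linarith [(abs_le.mp this).1]
  have hGbound : ‖G‖ ≤ ℓg1 * ‖x - x'‖ := by
    have h := hglip (x, b) (x', b)
    have hz' : grady g (x', b) = 0 := hgz x'
    simp only [hz', sub_zero, sub_self, norm_zero, ← hG] at h
    have h1 : ‖G‖ ≤ Real.sqrt (‖gradx g (x, b) - gradx g (x', b)‖ ^ 2 + ‖G‖ ^ 2) := by
      rw [show ‖G‖ = Real.sqrt (‖G‖ ^ 2) from (Real.sqrt_sq (norm_nonneg _)).symm]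
      apply Real.sqrt_le_sqrt
      nlinarith [sq_nonneg ‖gradx g (x, b) - gradx g (x', b)‖, Real.sq_sqrt (sq_nonneg ‖G‖)]
    have h2 : Real.sqrt (‖x - x'‖ ^ 2 + 0 ^ 2) = ‖x - x'‖ := by
      rw [show (0:ℝ) ^ 2 = 0 by ring, add_zero, Real.sqrt_sq (norm_nonneg _)]
    calc ‖G‖ ≤ Real.sqrt (‖gradx g (x, b) - gradx g (x', b)‖ ^ 2 + ‖G‖ ^ 2) := h1
      _ ≤ ℓg1 * Real.sqrt (‖x - x'‖ ^ 2 + 0 ^ 2) := by simpa using h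
      _ = ℓg1 * ‖x - x'‖ := by rw [h2]
  have hmain : μ * ‖Δ‖ ^ 2 ≤ ℓg1 * ‖x - x'‖ * ‖Δ‖ := by
    calc μ * ‖Δ‖ ^ 2 ≤ -(@inner ℝ _ _ G Δ) := key
      _ ≤ ‖G‖ * ‖Δ‖ := hGD
      _ ≤ ℓg1 * ‖x - x'‖ * ‖Δ‖ := mul_le_mul_of_nonneg_right hGbound (norm_nonneg _)
  rcases eq_or_lt_of_le (norm_nonneg Δ) with h0 | h0
  · rw [← h0]
    positivity
  · rw [div_mul_eq_mul_div, le_div_iff₀ hμ]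
    nlinarith [hmain]
end

section
/- Let g : ℝ^m × ℝ^n → ℝ be twice continuously differentiable, μ > 0, ℓ_{g,1}, ℓ_{g,2} > 0. Suppose for every x the map y ↦ g(x,y) is μ-strongly convex with unique minimizer y*(x), that y* is continuously differentiable, that ∇g is ℓ_{g,1}-Lipschitz (so in particular ‖∇²_{xy} g(x,y)‖_op ≤ ℓ_{g,1} for all (x,y)), and that the maps (x,y) ↦ ∇²_{xy} g(x,y) and (x,y) ↦ ∇²_{yy} g(x,y) are ℓ_{g,2}-Lipschitz in operator norm. Then the derivative map x ↦ D y*(x) is Lipschitz in operator norm with constant L_{y*} = (ℓ_{g,2}/μ + ℓ_{g,1} ℓ_{g,2}/μ²) √(1 + κ²), where κ = ℓ_{g,1}/μ: for all x, x', ‖D y*(x) − D y*(x')‖_op ≤ L_{y*} ‖x − x'‖. -/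
open ContinuousLinearMap RealInnerProductSpace

noncomputable def fromDualR (F : Type*) [NormedAddCommGroup F] [InnerProductSpace ℝ F]
    [CompleteSpace F] : (F →L[ℝ] ℝ) ≃ₗᵢ[ℝ] F where
  toFun T := (InnerProductSpace.toDual ℝ F).symm T
  invFun v := InnerProductSpace.toDual ℝ F v
  map_add' T S := map_add _ T S
  map_smul' c T := by
    have := (InnerProductSpace.toDual ℝ F).symm.map_smul' c T
    simpa [starRingEnd_apply] using this
  left_inv T := (InnerProductSpace.toDual ℝ F).apply_symm_apply T
  right_inv v := (InnerProductSpace.toDual ℝ F).symm_apply_apply v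
  norm_map' T := (InnerProductSpace.toDual ℝ F).symm.norm_map T

variable {E F : Type*} [NormedAddCommGroup E] [InnerProductSpace ℝ E] [CompleteSpace E]
  [NormedAddCommGroup F] [InnerProductSpace ℝ F] [CompleteSpace F]

lemma inner_fromDualR (T : F →L[ℝ] ℝ) (v : F) : ⟪fromDualR F T, v⟫ = T v := by
  have h : InnerProductSpace.toDual ℝ F (fromDualR F T) = T :=
    (InnerProductSpace.toDual ℝ F).apply_symm_apply T
  calc ⟪fromDualR F T, v⟫ = (InnerProductSpace.toDual ℝ F (fromDualR F T)) v :=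
        (InnerProductSpace.toDual_apply_apply (𝕜 := ℝ)).symm
    _ = T v := by rw [h]

-- the combined continuous linear map  T ↦ fromDualR (T ∘L inr)
noncomputable def PhiY (E F : Type*) [NormedAddCommGroup E] [InnerProductSpace ℝ E] [CompleteSpace E]
    [NormedAddCommGroup F] [InnerProductSpace ℝ F] [CompleteSpace F] :
    ((E × F) →L[ℝ] ℝ) →L[ℝ] F :=
  ((fromDualR F).toContinuousLinearEquiv : (F →L[ℝ] ℝ) →L[ℝ] F).comp
    ((ContinuousLinearMap.compL ℝ F (E × F) ℝ).flip (ContinuousLinearMap.inr ℝ E F))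

lemma PhiY_apply (T : (E × F) →L[ℝ] ℝ) :
    PhiY E F T = fromDualR F (T.comp (ContinuousLinearMap.inr ℝ E F)) := rfl

-- partial fderiv in y
lemma fderiv_partial_y {g : E × F → ℝ} (hg : Differentiable ℝ g) (p : E × F) :
    fderiv ℝ (fun y => g (p.1, y)) p.2 = (fderiv ℝ g p).comp (ContinuousLinearMap.inr ℝ E F) := by
  have h1 : HasFDerivAt (fun y : F => (p.1, y)) (ContinuousLinearMap.inr ℝ E F) p.2 :=
    hasFDerivAt_prodMk_right p.1 p.2
  have h2 : HasFDerivAt g (fderiv ℝ g p) (p.1, p.2) := by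
    simpa using (hg p).hasFDerivAt
  exact (h2.comp p.2 h1).fderiv


section main
variable {m n : ℕ}

variable {g : EuclideanSpace ℝ (Fin m) × EuclideanSpace ℝ (Fin n) → ℝ}

lemma grady_eq_fromDualR (p : EuclideanSpace ℝ (Fin m) × EuclideanSpace ℝ (Fin n)) :
    grady g p = fromDualR (EuclideanSpace ℝ (Fin n)) (fderiv ℝ (fun y => g (p.1, y)) p.2) := rfl

lemma grady_eq_PhiY (hg : ContDiff ℝ 2 g) (p : EuclideanSpace ℝ (Fin m) × EuclideanSpace ℝ (Fin n)) :
    grady g p = PhiY (EuclideanSpace ℝ (Fin m)) (EuclideanSpace ℝ (Fin n)) (fderiv ℝ g p) := by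
  rw [grady_eq_fromDualR, PhiY_apply, fderiv_partial_y (hg.differentiable (by norm_num)) p]

lemma grady_contDiff (hg : ContDiff ℝ 2 g) : ContDiff ℝ 1 (grady g) := by
  have : grady g = fun p => PhiY (EuclideanSpace ℝ (Fin m)) (EuclideanSpace ℝ (Fin n)) (fderiv ℝ g p) := funext (grady_eq_PhiY hg)
  rw [this]
  exact (PhiY (EuclideanSpace ℝ (Fin m)) (EuclideanSpace ℝ (Fin n))).contDiff.comp (hg.fderiv_right (le_refl 2))

lemma crossxy_eq (hg : ContDiff ℝ 2 g) (p : EuclideanSpace ℝ (Fin m) × EuclideanSpace ℝ (Fin n)) :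
    crossxy g p = (fderiv ℝ (grady g) p).comp (ContinuousLinearMap.inl ℝ (EuclideanSpace ℝ (Fin m)) (EuclideanSpace ℝ (Fin n))) := by
  have h1 : HasFDerivAt (fun x : EuclideanSpace ℝ (Fin m) => (x, p.2)) (ContinuousLinearMap.inl ℝ (EuclideanSpace ℝ (Fin m)) (EuclideanSpace ℝ (Fin n))) p.1 :=
    hasFDerivAt_prodMk_left p.1 p.2
  have h2 : HasFDerivAt (grady g) (fderiv ℝ (grady g) p) (p.1, p.2) := by
    simpa using ((grady_contDiff hg).differentiable one_ne_zero p).hasFDerivAt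
  exact (h2.comp p.1 h1).fderiv

lemma hessyy_eq (hg : ContDiff ℝ 2 g) (p : EuclideanSpace ℝ (Fin m) × EuclideanSpace ℝ (Fin n)) :
    hessyy g p = (fderiv ℝ (grady g) p).comp (ContinuousLinearMap.inr ℝ (EuclideanSpace ℝ (Fin m)) (EuclideanSpace ℝ (Fin n))) := by
  have h1 : HasFDerivAt (fun y : EuclideanSpace ℝ (Fin n) => (p.1, y)) (ContinuousLinearMap.inr ℝ (EuclideanSpace ℝ (Fin m)) (EuclideanSpace ℝ (Fin n))) p.2 :=
    hasFDerivAt_prodMk_right p.1 p.2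
  have h2 : HasFDerivAt (grady g) (fderiv ℝ (grady g) p) (p.1, p.2) := by
    simpa using ((grady_contDiff hg).differentiable one_ne_zero p).hasFDerivAt
  exact (h2.comp p.2 h1).fderiv

end main

lemma strong_mono {m n : ℕ} {g : EuclideanSpace ℝ (Fin m) × EuclideanSpace ℝ (Fin n) → ℝ}
    {μ : ℝ} (hg : ContDiff ℝ 2 g) (x : EuclideanSpace ℝ (Fin m))
    (hsc : ConvexOn ℝ Set.univ (fun y => g (x, y) - μ / 2 * ‖y‖ ^ 2))
    (y z : EuclideanSpace ℝ (Fin n)) :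
    μ * ‖y - z‖ ^ 2 ≤ ⟪grady g (x, y) - grady g (x, z), y - z⟫ := by
  set w := y - z with hw
  have hpart : ContDiff ℝ 2 (fun y' : EuclideanSpace ℝ (Fin n) => g (x, y')) :=
    hg.comp (contDiff_const.prodMk contDiff_id)
  have hc : ∀ t : ℝ, HasDerivAt (fun s : ℝ => z + s • w) w t := by
    intro t
    simpa using ((hasDerivAt_id t).smul_const w).const_add z
  have hgpart : ∀ t : ℝ, HasDerivAt (fun s : ℝ => g (x, z + s • w))
      (⟪grady g (x, z + t • w), w⟫) t := by
    intro t
    have hT : HasFDerivAt (fun y' : EuclideanSpace ℝ (Fin n) => g (x, y'))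
        (fderiv ℝ (fun y' : EuclideanSpace ℝ (Fin n) => g (x, y')) (z + t • w)) (z + t • w) :=
      (hpart.differentiable (by norm_num) (z + t • w)).hasFDerivAt
    have := hT.comp_hasDerivAt t (hc t)
    have hval : ⟪grady g (x, z + t • w), w⟫
        = fderiv ℝ (fun y' : EuclideanSpace ℝ (Fin n) => g (x, y')) (z + t • w) w := by
      exact inner_fromDualR _ w
    rw [hval]
    exact this
  have hnorm : ∀ t : ℝ, HasDerivAt (fun s : ℝ => ‖z + s • w‖ ^ 2)
      (2 * ⟪z + t • w, w⟫) t := by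
    intro t
    have := HasDerivAt.inner ℝ (hc t) (hc t)
    have heq : (fun s : ℝ => ⟪z + s • w, z + s • w⟫) = fun s : ℝ => ‖z + s • w‖ ^ 2 := by
      funext s; rw [real_inner_self_eq_norm_sq]
    rw [heq] at this
    rw [real_inner_comm (z + t • w) w, ← two_mul] at this
    exact this
  have hφ : ∀ t : ℝ, HasDerivAt (fun s : ℝ => g (x, z + s • w) - μ / 2 * ‖z + s • w‖ ^ 2)
      (⟪grady g (x, z + t • w), w⟫ - μ / 2 * (2 * ⟪z + t • w, w⟫)) t := fun t =>
    (hgpart t).sub ((hnorm t).const_mul (μ / 2))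
  have hφconv : ConvexOn ℝ Set.univ
      (fun s : ℝ => g (x, z + s • w) - μ / 2 * ‖z + s • w‖ ^ 2) := by
    have h1 := hsc.comp_affineMap (AffineMap.lineMap z y)
    have h2 : ((fun y' => g (x, y') - μ / 2 * ‖y'‖ ^ 2) ∘ (AffineMap.lineMap z y))
        = fun s : ℝ => g (x, z + s • w) - μ / 2 * ‖z + s • w‖ ^ 2 := by
      funext s
      simp only [Function.comp_apply, AffineMap.lineMap_apply_module]
      have h3 : (1 - s) • z + s • y = z + s • w := by rw [hw]; module
      rw [h3]
    rw [h2] at h1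
    simpa using h1
  have hmono := hφconv.monotoneOn_deriv (fun t _ => (hφ t).differentiableAt)
  have key := hmono (Set.mem_univ (0 : ℝ)) (Set.mem_univ (1 : ℝ)) zero_le_one
  rw [(hφ 0).deriv, (hφ 1).deriv] at key
  have e0 : z + (0 : ℝ) • w = z := by simp
  have e1 : z + (1 : ℝ) • w = y := by simp [hw]
  rw [e0, e1] at key
  have hinner1 : ⟪grady g (x, y) - grady g (x, z), w⟫
      = ⟪grady g (x, y), w⟫ - ⟪grady g (x, z), w⟫ := inner_sub_left _ _ _
  have hinner2 : ⟪y, w⟫ - ⟪z, w⟫ = ‖w‖ ^ 2 := by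
    rw [← inner_sub_left, ← hw, real_inner_self_eq_norm_sq]
  have kB : μ / 2 * (2 * ⟪z, w⟫) = μ * ⟪z, w⟫ := by ring
  have kD : μ / 2 * (2 * ⟪y, w⟫) = μ * ⟪y, w⟫ := by ring
  rw [kB, kD] at key
  show μ * ‖w‖ ^ 2 ≤ ⟪grady g (x, y) - grady g (x, z), w⟫
  rw [hinner1, ← hinner2, mul_sub]
  linarith

lemma grady_min_eq_zero {m n : ℕ} {g : EuclideanSpace ℝ (Fin m) × EuclideanSpace ℝ (Fin n) → ℝ}
    {x : EuclideanSpace ℝ (Fin m)} {y0 : EuclideanSpace ℝ (Fin n)}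
    (hmin : ∀ y, g (x, y0) ≤ g (x, y)) : grady g (x, y0) = 0 := by
  have hloc : IsLocalMin (fun y => g (x, y)) y0 :=
    Filter.Eventually.of_forall hmin
  have hD : fderiv ℝ (fun y => g (x, y)) y0 = 0 := hloc.fderiv_eq_zero
  have : grady g (x, y0)
      = fromDualR (EuclideanSpace ℝ (Fin n)) (fderiv ℝ (fun y => g (x, y)) y0) := rfl
  rw [this, hD, map_zero]

lemma hess_coercive {m n : ℕ} {g : EuclideanSpace ℝ (Fin m) × EuclideanSpace ℝ (Fin n) → ℝ}
    {μ : ℝ} (hg : ContDiff ℝ 2 g) (p : EuclideanSpace ℝ (Fin m) × EuclideanSpace ℝ (Fin n))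
    (hsc : ConvexOn ℝ Set.univ (fun y => g (p.1, y) - μ / 2 * ‖y‖ ^ 2))
    (v : EuclideanSpace ℝ (Fin n)) :
    μ * ‖v‖ ^ 2 ≤ ⟪hessyy g p v, v⟫ := by
  have hGp : ContDiff ℝ 1 (fun y => grady g (p.1, y)) :=
    (grady_contDiff hg).comp (contDiff_const.prodMk contDiff_id)
  have hH : HasFDerivAt (fun y => grady g (p.1, y)) (hessyy g p) p.2 :=
    (hGp.differentiable one_ne_zero p.2).hasFDerivAt
  have hc : ∀ t : ℝ, HasDerivAt (fun s : ℝ => p.2 + s • v) v t := by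
    intro t
    simpa using ((hasDerivAt_id t).smul_const v).const_add p.2
  set F0 : ℝ → ℝ := fun t => ⟪grady g (p.1, p.2 + t • v), v⟫ with hF0def
  have hF0 : HasDerivAt F0 (⟪hessyy g p v, v⟫) 0 := by
    have h1 : HasDerivAt (fun t : ℝ => grady g (p.1, p.2 + t • v)) (hessyy g p v) 0 := by
      have := hH.comp_hasDerivAt_of_eq 0 (hc 0) (by simp)
      exact this
    have h2 := HasDerivAt.inner ℝ h1 (hasDerivAt_const (0 : ℝ) v)
    simpa using h2
  have hslope : ∀ t : ℝ, 0 < t → μ * ‖v‖ ^ 2 ≤ (F0 t - F0 0) / t := by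
    intro t ht
    have := strong_mono hg p.1 hsc (p.2 + t • v) p.2
    have e1 : p.2 + t • v - p.2 = t • v := by abel
    rw [e1] at this
    have e2 : ‖t • v‖ ^ 2 = t ^ 2 * ‖v‖ ^ 2 := by
      rw [norm_smul, mul_pow, Real.norm_eq_abs, sq_abs]
    have e3 : ⟪grady g (p.1, p.2 + t • v) - grady g (p.1, p.2), t • v⟫
        = t * (F0 t - F0 0) := by
      rw [inner_sub_left, real_inner_smul_right, real_inner_smul_right, hF0def]
      simp only []
      have : p.2 + (0:ℝ) • v = p.2 := by simp
      rw [this]; ring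
    rw [e2, e3] at this
    rw [le_div_iff₀ ht]
    nlinarith [this, ht]
  have htend : Filter.Tendsto (fun t : ℝ => (F0 t - F0 0) / t) (nhdsWithin 0 (Set.Ioi 0))
      (nhds (⟪hessyy g p v, v⟫)) := by
    have := hasDerivAt_iff_tendsto_slope.mp hF0
    have hmono : nhdsWithin (0:ℝ) (Set.Ioi 0) ≤ nhdsWithin (0:ℝ) {(0:ℝ)}ᶜ := by
      apply nhdsWithin_mono
      intro t ht
      exact ne_of_gt ht
    have h2 := this.mono_left hmono
    refine h2.congr fun t => ?_
    simp [slope_def_field, div_eq_inv_mul]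
  refine ge_of_tendsto htend ?_
  filter_upwards [self_mem_nhdsWithin] with t ht
  exact hslope t ht

lemma hess_norm_lower {m n : ℕ} {g : EuclideanSpace ℝ (Fin m) × EuclideanSpace ℝ (Fin n) → ℝ}
    {μ : ℝ} (hμ : 0 < μ) (hg : ContDiff ℝ 2 g)
    (p : EuclideanSpace ℝ (Fin m) × EuclideanSpace ℝ (Fin n))
    (hsc : ConvexOn ℝ Set.univ (fun y => g (p.1, y) - μ / 2 * ‖y‖ ^ 2))
    (v : EuclideanSpace ℝ (Fin n)) :
    μ * ‖v‖ ≤ ‖hessyy g p v‖ := by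
  rcases eq_or_ne v 0 with rfl | hv
  · simp
  · have h1 := hess_coercive hg p hsc v
    have h2 : ⟪hessyy g p v, v⟫ ≤ ‖hessyy g p v‖ * ‖v‖ := real_inner_le_norm _ _
    have hvpos : 0 < ‖v‖ := norm_pos_iff.mpr hv
    have : μ * ‖v‖ ^ 2 ≤ ‖hessyy g p v‖ * ‖v‖ := le_trans h1 h2
    have := mul_le_mul_iff_of_pos_right hvpos |>.mp (by nlinarith : μ * ‖v‖ * ‖v‖ ≤ ‖hessyy g p v‖ * ‖v‖)
    exact this

-- the chain-rule identity
lemma key_identity {m n : ℕ} {g : EuclideanSpace ℝ (Fin m) × EuclideanSpace ℝ (Fin n) → ℝ}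
    (hg : ContDiff ℝ 2 g) {ystar : EuclideanSpace ℝ (Fin m) → EuclideanSpace ℝ (Fin n)}
    (hystar : ContDiff ℝ 1 ystar)
    (hfoc : ∀ x, grady g (x, ystar x) = 0) (x : EuclideanSpace ℝ (Fin m)) :
    crossxy g (x, ystar x) + (hessyy g (x, ystar x)).comp (fderiv ℝ ystar x) = 0 := by
  set p := (x, ystar x) with hp
  set A := fderiv ℝ (grady g) p with hA
  set D := fderiv ℝ ystar x with hD
  have hinner : HasFDerivAt (fun x' => (x', ystar x'))
      ((ContinuousLinearMap.id ℝ (EuclideanSpace ℝ (Fin m))).prod D) x :=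
    (hasFDerivAt_id x).prodMk ((hystar.differentiable one_ne_zero x).hasFDerivAt)
  have hG : HasFDerivAt (grady g) A p :=
    ((grady_contDiff hg).differentiable one_ne_zero p).hasFDerivAt
  have hcomp : HasFDerivAt (fun x' => grady g (x', ystar x'))
      (A.comp ((ContinuousLinearMap.id ℝ (EuclideanSpace ℝ (Fin m))).prod D)) x :=
    by have h := HasFDerivAt.comp x hG hinner; exact h
  have hconst : HasFDerivAt (fun x' => grady g (x', ystar x'))
      (0 : EuclideanSpace ℝ (Fin m) →L[ℝ] EuclideanSpace ℝ (Fin n)) x := by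
    have : (fun x' => grady g (x', ystar x')) = fun _ => (0 : EuclideanSpace ℝ (Fin n)) :=
      funext hfoc
    rw [this]
    exact hasFDerivAt_const _ _
  have hzero : A.comp ((ContinuousLinearMap.id ℝ (EuclideanSpace ℝ (Fin m))).prod D) = 0 :=
    hcomp.unique hconst
  have hcross : crossxy g p = A.comp (ContinuousLinearMap.inl ℝ _ _) := crossxy_eq hg p
  have hhess : hessyy g p = A.comp (ContinuousLinearMap.inr ℝ _ _) := hessyy_eq hg p
  refine ContinuousLinearMap.ext fun u => ?_
  rw [ContinuousLinearMap.zero_apply]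
  have : ((u, D u) : EuclideanSpace ℝ (Fin m) × EuclideanSpace ℝ (Fin n))
      = (u, 0) + (0, D u) := by simp
  calc (crossxy g p + (hessyy g p).comp D) u
      = A (u, 0) + A (0, D u) := by
        simp [hcross, hhess, ContinuousLinearMap.add_apply, ContinuousLinearMap.comp_apply]
    _ = A ((u, D u)) := by rw [this, map_add]
    _ = 0 := by
        have := congrFun (congrArg DFunLike.coe hzero) u
        simpa using this

lemma grady_lip_x {m n : ℕ} {g : EuclideanSpace ℝ (Fin m) × EuclideanSpace ℝ (Fin n) → ℝ}
    {ℓg1 : ℝ}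
    (hglip : ∀ p q : EuclideanSpace ℝ (Fin m) × EuclideanSpace ℝ (Fin n),
      Real.sqrt (‖gradx g p - gradx g q‖ ^ 2 + ‖grady g p - grady g q‖ ^ 2)
        ≤ ℓg1 * Real.sqrt (‖p.1 - q.1‖ ^ 2 + ‖p.2 - q.2‖ ^ 2))
    (a b : EuclideanSpace ℝ (Fin m)) (y : EuclideanSpace ℝ (Fin n)) :
    ‖grady g (a, y) - grady g (b, y)‖ ≤ ℓg1 * ‖a - b‖ := by
  have h := hglip (a, y) (b, y)
  simp only [sub_self, norm_zero] at h
  have h2 : Real.sqrt (‖a - b‖ ^ 2 + (0:ℝ) ^ 2) = ‖a - b‖ := by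
    simp [Real.sqrt_sq (norm_nonneg _)]
  rw [h2] at h
  refine le_trans ?_ h
  rw [Real.le_sqrt (norm_nonneg _)]
  · have := sq_nonneg ‖gradx g (a, y) - gradx g (b, y)‖
    linarith
  · positivity

lemma crossxy_bound {m n : ℕ} {g : EuclideanSpace ℝ (Fin m) × EuclideanSpace ℝ (Fin n) → ℝ}
    {ℓg1 : ℝ} (hℓg1 : 0 < ℓg1) (hg : ContDiff ℝ 2 g)
    (hglip : ∀ p q : EuclideanSpace ℝ (Fin m) × EuclideanSpace ℝ (Fin n),
      Real.sqrt (‖gradx g p - gradx g q‖ ^ 2 + ‖grady g p - grady g q‖ ^ 2)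
        ≤ ℓg1 * Real.sqrt (‖p.1 - q.1‖ ^ 2 + ‖p.2 - q.2‖ ^ 2))
    (p : EuclideanSpace ℝ (Fin m) × EuclideanSpace ℝ (Fin n)) :
    ‖crossxy g p‖ ≤ ℓg1 := by
  have hf : ContDiff ℝ 1 (fun x => grady g (x, p.2)) :=
    (grady_contDiff hg).comp (contDiff_id.prodMk contDiff_const)
  have hd : HasFDerivAt (fun x => grady g (x, p.2)) (crossxy g p) p.1 :=
    (hf.differentiable one_ne_zero p.1).hasFDerivAt
  have hlip : LipschitzWith ⟨ℓg1, hℓg1.le⟩ (fun x => grady g (x, p.2)) := by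
    apply LipschitzWith.of_dist_le_mul
    intro a b
    rw [dist_eq_norm, dist_eq_norm]
    exact grady_lip_x hglip a b p.2
  exact hd.le_of_lipschitz hlip

lemma ystar_lip {m n : ℕ} {g : EuclideanSpace ℝ (Fin m) × EuclideanSpace ℝ (Fin n) → ℝ}
    {μ ℓg1 : ℝ} (hμ : 0 < μ) (hℓg1 : 0 ≤ ℓg1) (hg : ContDiff ℝ 2 g)
    {ystar : EuclideanSpace ℝ (Fin m) → EuclideanSpace ℝ (Fin n)}
    (hsc : ∀ x, ConvexOn ℝ Set.univ (fun y => g (x, y) - μ / 2 * ‖y‖ ^ 2))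
    (hfoc : ∀ x, grady g (x, ystar x) = 0)
    (hglip : ∀ p q : EuclideanSpace ℝ (Fin m) × EuclideanSpace ℝ (Fin n),
      Real.sqrt (‖gradx g p - gradx g q‖ ^ 2 + ‖grady g p - grady g q‖ ^ 2)
        ≤ ℓg1 * Real.sqrt (‖p.1 - q.1‖ ^ 2 + ‖p.2 - q.2‖ ^ 2))
    (x x' : EuclideanSpace ℝ (Fin m)) :
    ‖ystar x - ystar x'‖ ≤ (ℓg1 / μ) * ‖x - x'‖ := by
  set y := ystar x
  set y' := ystar x'
  have h1 := strong_mono hg x (hsc x) y y'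
  have h2 : grady g (x, y) - grady g (x, y') = grady g (x', y') - grady g (x, y') := by
    rw [hfoc x, hfoc x']
  rw [h2] at h1
  have h3 : ⟪grady g (x', y') - grady g (x, y'), y - y'⟫
      ≤ ‖grady g (x', y') - grady g (x, y')‖ * ‖y - y'‖ := real_inner_le_norm _ _
  have h4 : ‖grady g (x', y') - grady g (x, y')‖ ≤ ℓg1 * ‖x' - x‖ :=
    grady_lip_x hglip x' x y'
  have h5 : ‖x' - x‖ = ‖x - x'‖ := norm_sub_rev _ _
  rcases eq_or_lt_of_le (norm_nonneg (y - y')) with h0 | hpos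
  · rw [← h0]
    positivity
  · have : μ * ‖y - y'‖ * ‖y - y'‖ ≤ ℓg1 * ‖x - x'‖ * ‖y - y'‖ := by
      have h7 := mul_le_mul_of_nonneg_right h4 (norm_nonneg (y - y'))
      rw [h5] at h7
      have h1' : μ * ‖y - y'‖ * ‖y - y'‖
          ≤ ⟪grady g (x', y') - grady g (x, y'), y - y'⟫ := by
        rw [mul_assoc, ← pow_two]; exact h1
      linarith [h1', h3, h7]
    have h6 := (mul_le_mul_iff_of_pos_right hpos).mp this
    rw [div_mul_eq_mul_div, le_div_iff₀ hμ]
    linarith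

set_option maxHeartbeats 1000000 in
/-- Lipschitzness of x ↦ D y*(x) in operator norm, with constant
L_{y*} = (ℓ_{g,2}/μ + ℓ_{g,1}ℓ_{g,2}/μ²)√(1+κ²), κ = ℓ_{g,1}/μ. -/
theorem statement_3 {m n : ℕ}
    (g : EuclideanSpace ℝ (Fin m) × EuclideanSpace ℝ (Fin n) → ℝ)
    (μ ℓg1 ℓg2 : ℝ) (hμ : 0 < μ) (hℓg1 : 0 < ℓg1) (hℓg2 : 0 < ℓg2)
    (hg : ContDiff ℝ 2 g)
    (ystar : EuclideanSpace ℝ (Fin m) → EuclideanSpace ℝ (Fin n))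
    -- μ-strong convexity of y ↦ g(x,y)
    (hsc : ∀ x, ConvexOn ℝ Set.univ (fun y => g (x, y) - μ / 2 * ‖y‖ ^ 2))
    -- y*(x) is the unique minimizer of y ↦ g(x,y)
    (hmin : ∀ x y, g (x, ystar x) ≤ g (x, y))
    (huniq : ∀ x y, (∀ z, g (x, y) ≤ g (x, z)) → y = ystar x)
    -- y* is continuously differentiable
    (hystar : ContDiff ℝ 1 ystar)
    -- ∇g is ℓ_{g,1}-Lipschitz in the joint variable
    (hglip : ∀ p q : EuclideanSpace ℝ (Fin m) × EuclideanSpace ℝ (Fin n),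
      Real.sqrt (‖gradx g p - gradx g q‖ ^ 2 + ‖grady g p - grady g q‖ ^ 2)
        ≤ ℓg1 * Real.sqrt (‖p.1 - q.1‖ ^ 2 + ‖p.2 - q.2‖ ^ 2))
    -- ∇²_{xy} g and ∇²_{yy} g are ℓ_{g,2}-Lipschitz in operator norm
    (hcrosslip : ∀ p q : EuclideanSpace ℝ (Fin m) × EuclideanSpace ℝ (Fin n),
      ‖crossxy g p - crossxy g q‖
        ≤ ℓg2 * Real.sqrt (‖p.1 - q.1‖ ^ 2 + ‖p.2 - q.2‖ ^ 2))
    (hhesslip : ∀ p q : EuclideanSpace ℝ (Fin m) × EuclideanSpace ℝ (Fin n),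
      ‖hessyy g p - hessyy g q‖
        ≤ ℓg2 * Real.sqrt (‖p.1 - q.1‖ ^ 2 + ‖p.2 - q.2‖ ^ 2)) :
    ∀ x x', ‖fderiv ℝ ystar x - fderiv ℝ ystar x'‖ ≤
      (ℓg2 / μ + ℓg1 * ℓg2 / μ ^ 2) * Real.sqrt (1 + (ℓg1 / μ) ^ 2) * ‖x - x'‖ := by
  have hfoc : ∀ x, grady g (x, ystar x) = 0 := fun x => grady_min_eq_zero (hmin x)
  have hkey := key_identity hg hystar hfoc
  set κ := ℓg1 / μ with hκ
  have hκpos : 0 < κ := div_pos hℓg1 hμ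
  -- bound on the derivative of ystar
  have hDbound : ∀ x0, ‖fderiv ℝ ystar x0‖ ≤ κ := by
    intro x0
    refine ContinuousLinearMap.opNorm_le_bound _ hκpos.le fun u => ?_
    set D := fderiv ℝ ystar x0
    have hid : (hessyy g (x0, ystar x0)).comp D = -crossxy g (x0, ystar x0) :=
      eq_neg_of_add_eq_zero_right (hkey x0)
    have h1 : μ * ‖D u‖ ≤ ‖hessyy g (x0, ystar x0) (D u)‖ :=
      hess_norm_lower hμ hg (x0, ystar x0) (hsc x0) (D u)
    have h2 : hessyy g (x0, ystar x0) (D u) = -(crossxy g (x0, ystar x0) u) := by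
      have := congrFun (congrArg DFunLike.coe hid) u
      simpa using this
    rw [h2, norm_neg] at h1
    have h3 : ‖crossxy g (x0, ystar x0) u‖ ≤ ℓg1 * ‖u‖ :=
      le_trans (ContinuousLinearMap.le_opNorm _ u)
        (mul_le_mul_of_nonneg_right (crossxy_bound hℓg1 hg hglip _) (norm_nonneg u))
    rw [hκ, div_mul_eq_mul_div, le_div_iff₀ hμ]
    calc ‖D u‖ * μ = μ * ‖D u‖ := mul_comm _ _
      _ ≤ ℓg1 * ‖u‖ := le_trans h1 h3
  intro x x'
  set p := (x, ystar x) with hp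
  set q := (x', ystar x') with hq
  -- distance bound
  have hylip : ‖ystar x - ystar x'‖ ≤ κ * ‖x - x'‖ :=
    ystar_lip hμ hℓg1.le hg hsc hfoc hglip x x'
  have hS : Real.sqrt (‖x - x'‖ ^ 2 + ‖ystar x - ystar x'‖ ^ 2)
      ≤ Real.sqrt (1 + κ ^ 2) * ‖x - x'‖ := by
    have h1 : ‖ystar x - ystar x'‖ ^ 2 ≤ (κ * ‖x - x'‖) ^ 2 :=
      pow_le_pow_left₀ (norm_nonneg _) hylip 2
    have h2 : ‖x - x'‖ ^ 2 + ‖ystar x - ystar x'‖ ^ 2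
        ≤ (1 + κ ^ 2) * ‖x - x'‖ ^ 2 := by nlinarith [h1]
    calc Real.sqrt (‖x - x'‖ ^ 2 + ‖ystar x - ystar x'‖ ^ 2)
        ≤ Real.sqrt ((1 + κ ^ 2) * ‖x - x'‖ ^ 2) := Real.sqrt_le_sqrt h2
      _ = Real.sqrt (1 + κ ^ 2) * ‖x - x'‖ := by
          rw [Real.sqrt_mul (by positivity), Real.sqrt_sq (norm_nonneg _)]
  set S := Real.sqrt (1 + κ ^ 2) * ‖x - x'‖ with hSdef
  have hSnn : 0 ≤ S := by positivity
  have hC : ‖crossxy g p - crossxy g q‖ ≤ ℓg2 * S :=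
    le_trans (hcrosslip p q) (mul_le_mul_of_nonneg_left hS hℓg2.le)
  have hH : ‖hessyy g p - hessyy g q‖ ≤ ℓg2 * S :=
    le_trans (hhesslip p q) (mul_le_mul_of_nonneg_left hS hℓg2.le)
  set D := fderiv ℝ ystar x with hD
  set D' := fderiv ℝ ystar x' with hD'
  -- main estimate
  refine ContinuousLinearMap.opNorm_le_bound _ (by positivity) fun u => ?_
  have hid1 : hessyy g p (D u) = -(crossxy g p u) := by
    have h1 : (hessyy g p).comp D = -crossxy g p :=
      eq_neg_of_add_eq_zero_right (hkey x)
    have := congrFun (congrArg DFunLike.coe h1) u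
    simpa using this
  have hid2 : hessyy g q (D' u) = -(crossxy g q u) := by
    have h1 : (hessyy g q).comp D' = -crossxy g q :=
      eq_neg_of_add_eq_zero_right (hkey x')
    have := congrFun (congrArg DFunLike.coe h1) u
    simpa using this
  have hmain : hessyy g p ((D - D') u)
      = (crossxy g q - crossxy g p) u - (hessyy g p - hessyy g q) (D' u) := by
    have e1 : (D - D') u = D u - D' u := rfl
    rw [e1, map_sub, hid1]
    have e2 : (crossxy g q - crossxy g p) u = crossxy g q u - crossxy g p u := rfl
    have e3 : (hessyy g p - hessyy g q) (D' u) = hessyy g p (D' u) - hessyy g q (D' u) := rfl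
    rw [e2, e3, hid2]
    abel
  have h1 : μ * ‖(D - D') u‖ ≤ ‖hessyy g p ((D - D') u)‖ :=
    hess_norm_lower hμ hg p (hsc x) _
  have h2 : ‖hessyy g p ((D - D') u)‖
      ≤ ℓg2 * S * ‖u‖ + ℓg2 * S * (κ * ‖u‖) := by
    rw [hmain]
    refine le_trans (norm_sub_le _ _) ?_
    have hb1 : ‖(crossxy g q - crossxy g p) u‖ ≤ ℓg2 * S * ‖u‖ := by
      refine le_trans (ContinuousLinearMap.le_opNorm _ u) ?_
      rw [norm_sub_rev] at hC
      exact mul_le_mul_of_nonneg_right hC (norm_nonneg u)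
    have hb2 : ‖(hessyy g p - hessyy g q) (D' u)‖ ≤ ℓg2 * S * (κ * ‖u‖) := by
      refine le_trans (ContinuousLinearMap.le_opNorm _ (D' u)) ?_
      have : ‖D' u‖ ≤ κ * ‖u‖ :=
        le_trans (ContinuousLinearMap.le_opNorm _ u)
          (mul_le_mul_of_nonneg_right (hDbound x') (norm_nonneg u))
      exact mul_le_mul hH this (norm_nonneg _) (by positivity)
    exact add_le_add hb1 hb2
  have h3 : μ * ‖(D - D') u‖ ≤ ℓg2 * S * (1 + κ) * ‖u‖ := by
    refine le_trans h1 (le_trans h2 (le_of_eq (by ring)))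
  have hfinal : ‖(D - D') u‖ ≤ (ℓg2 / μ + ℓg1 * ℓg2 / μ ^ 2) * Real.sqrt (1 + κ ^ 2)
      * ‖x - x'‖ * ‖u‖ := by
    have hconst : (ℓg2 / μ + ℓg1 * ℓg2 / μ ^ 2) * Real.sqrt (1 + κ ^ 2) * ‖x - x'‖
        = (ℓg2 * S * (1 + κ)) / μ := by
      rw [hSdef, hκ]
      field_simp
    rw [hconst, div_mul_eq_mul_div, le_div_iff₀ hμ]
    calc ‖(D - D') u‖ * μ = μ * ‖(D - D') u‖ := mul_comm _ _
      _ ≤ ℓg2 * S * (1 + κ) * ‖u‖ := h3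
  exact hfinal
end

section
/- In the Euclidean bilevel setting below, the map v* : ℝ^m → ℝ^n, v*(x) := (∇²_{yy} g(x, y*(x)))⁻¹ ∇_y f(x, y*(x)), is Lipschitz with constant √(1+κ²) ( ℓ_{f,0} ℓ_{g,2}/μ² + ℓ_{f,1}/μ ): for all x, x', ‖v*(x) − v*(x')‖ ≤ √(1+κ²) ( ℓ_{f,0} ℓ_{g,2}/μ² + ℓ_{f,1}/μ ) ‖x − x'‖. -/
set_option linter.unusedSectionVars false
set_option maxHeartbeats 1000000
section
open Set
local notation "⟪" x ", " y "⟫" => @inner ℝ _ _ x y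

variable {E : Type*} [NormedAddCommGroup E] [InnerProductSpace ℝ E] [CompleteSpace E]

lemma inner_gradient_apply (f : E → ℝ) (x v : E) : ⟪gradient f x, v⟫ = fderiv ℝ f x v :=
  InnerProductSpace.toDual_symm_apply

lemma norm_gradient_eq (f : E → ℝ) (x : E) : ‖gradient f x‖ = ‖fderiv ℝ f x‖ :=
  LinearIsometryEquiv.norm_map _ _

lemma convex_grad_ineq {f : E → ℝ} {L : E →L[ℝ] ℝ} {x y : E}
    (hconv : ConvexOn ℝ Set.univ f) (hL : HasFDerivAt f L x) :
    L (y - x) ≤ f y - f x := by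
  have hline : HasDerivAt (fun t : ℝ => t • (y - x) + x) (y - x) 0 := by
    simpa using ((hasDerivAt_id (0:ℝ)).smul_const (y - x)).add_const x
  have hL' : HasFDerivAt f L ((0:ℝ) • (y - x) + x) := by simpa using hL
  have hcomp : HasDerivAt (fun t : ℝ => f (t • (y - x) + x)) (L (y - x)) 0 := by
    simpa [Function.comp_def] using hL'.comp_hasDerivAt (x := (0:ℝ)) hline
  have hφ : ConvexOn ℝ Set.univ (fun t : ℝ => f (t • (y - x) + x)) := by
    have := hconv.comp_affineMap (AffineMap.lineMap x y)
    simp only [Set.preimage_univ] at this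
    have heq : (f ∘ (AffineMap.lineMap x y) : ℝ → ℝ) = fun t : ℝ => f (t • (y - x) + x) := by
      funext t
      simp [AffineMap.lineMap_apply_module]
      congr 1
      module
    exact heq ▸ this
  have := hφ.le_slope_of_hasDerivAt (Set.mem_univ (0:ℝ)) (Set.mem_univ 1) zero_lt_one hcomp
  simpa [slope_def_field] using this

lemma strong_mono_s6 {μ : ℝ} {h : E → ℝ} (hconv : ConvexOn ℝ Set.univ (fun y => h y - μ / 2 * ‖y‖ ^ 2))
    (hdiff : Differentiable ℝ h) (y1 y2 : E) :
    μ * ‖y1 - y2‖ ^ 2 ≤ ⟪gradient h y1 - gradient h y2, y1 - y2⟫ := by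
  have hD : ∀ y : E, HasFDerivAt (fun y' => h y' - μ / 2 * ‖y'‖ ^ 2)
      (fderiv ℝ h y - (μ / 2) • (2 • (innerSL ℝ y))) y := fun y =>
    ((hdiff y).hasFDerivAt).sub (((hasStrictFDerivAt_norm_sq y).hasFDerivAt).const_mul (μ / 2))
  have h1 := convex_grad_ineq hconv (hD y1) (y := y2)
  have h2 := convex_grad_ineq hconv (hD y2) (y := y1)
  have hsum : (fderiv ℝ h y1 - (μ / 2) • (2 • (innerSL ℝ y1))) (y2 - y1)
      + (fderiv ℝ h y2 - (μ / 2) • (2 • (innerSL ℝ y2))) (y1 - y2) ≤ 0 := by linarith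
  have e1 : ∀ y v : E, (fderiv ℝ h y - (μ / 2) • (2 • (innerSL ℝ y))) v
      = ⟪gradient h y, v⟫ - μ * ⟪y, v⟫ := by
    intro y v
    simp [inner_gradient_apply, innerSL_apply_apply]
    ring
  rw [e1, e1] at hsum
  have : ⟪y1 - y2, y1 - y2⟫ = ‖y1 - y2‖ ^ 2 := real_inner_self_eq_norm_sq _
  rw [inner_sub_left]
  have i1 : ⟪gradient h y1, y1 - y2⟫ = - ⟪gradient h y1, y2 - y1⟫ := by
    rw [← inner_neg_right]; congr 1; abel
  have i2 : ⟪y2, y1 - y2⟫ = - ⟪y2, y2 - y1⟫ := by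
    rw [← inner_neg_right]; congr 1; abel
  have i3 : ⟪y1 - y2, y1 - y2⟫ = ⟪y1, y1 - y2⟫ - ⟪y2, y1 - y2⟫ := inner_sub_left _ _ _
  have i4 : ⟪y1, y2 - y1⟫ = - ⟪y1, y1 - y2⟫ := by
    rw [← inner_neg_right]; congr 1; abel
  have j1 : μ * ⟪y1, y2 - y1⟫ = -(μ * ⟪y1, y1 - y2⟫) := by rw [i4]; ring
  have i6 : μ * ⟪y1, y1 - y2⟫ - μ * ⟪y2, y1 - y2⟫ = μ * ‖y1 - y2‖ ^ 2 := by
    rw [← mul_sub, ← i3, this]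
  linarith [hsum, i1, j1, i6]

lemma coercive_of_strong_mono {μ : ℝ} {φ : E → E} {H : E →L[ℝ] E} {y : E}
    (hH : HasFDerivAt φ H y)
    (hmono : ∀ y1 y2 : E, μ * ‖y1 - y2‖ ^ 2 ≤ ⟪φ y1 - φ y2, y1 - y2⟫) (v : E) :
    μ * ‖v‖ ^ 2 ≤ ⟪H v, v⟫ := by
  set ψ : ℝ → ℝ := fun t => ⟪φ (y + t • v) - φ y, v⟫ with hψ
  have hline : ∀ t : ℝ, HasDerivAt (fun s : ℝ => y + s • v) v t := by
    intro t
    simpa using ((hasDerivAt_id t).smul_const v).const_add y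
  have hφd : HasDerivAt (fun t : ℝ => φ (y + t • v)) (H v) 0 := by
    have h0 : HasFDerivAt φ H (y + (0:ℝ) • v) := by simpa using hH
    simpa [Function.comp_def] using h0.comp_hasDerivAt (x := (0:ℝ)) (hline 0)
  have hψd : HasDerivAt ψ ⟪H v, v⟫ 0 := by
    have : HasDerivAt (fun t : ℝ => φ (y + t • v) - φ y) (H v) 0 := hφd.sub_const (φ y)
    have hcomp := ((innerSL ℝ v).hasFDerivAt (x := φ (y + (0:ℝ) • v) - φ y)).comp_hasDerivAt
      (x := (0:ℝ)) this
    have : HasDerivAt (fun t : ℝ => ⟪v, φ (y + t • v) - φ y⟫) ⟪v, H v⟫ 0 := by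
      simpa [Function.comp_def] using hcomp
    have := this.congr_deriv (real_inner_comm v (H v)).symm
    simpa [hψ, real_inner_comm v] using this
  have htend : Filter.Tendsto (slope ψ 0) (nhdsWithin 0 (Set.Ioi 0)) (nhds ⟪H v, v⟫) :=
    ((hasDerivAt_iff_tendsto_slope).mp hψd).mono_left
      (nhdsWithin_mono 0 (fun t ht => ne_of_gt ht))
  refine ge_of_tendsto htend ?_
  filter_upwards [self_mem_nhdsWithin] with t (ht : 0 < t)
  have key := hmono (y + t • v) y
  have h1 : y + t • v - y = t • v := by abel
  rw [h1] at key
  have h2 : ⟪φ (y + t • v) - φ y, t • v⟫ = t * ψ t := by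
    rw [real_inner_smul_right]
  have h3 : ‖t • v‖ ^ 2 = t ^ 2 * ‖v‖ ^ 2 := by
    rw [norm_smul]; simp [abs_of_pos ht]; ring
  rw [h2, h3] at key
  have hslope : slope ψ 0 t = ψ t / t := by
    simp [slope_def_field, hψ]
  rw [hslope, le_div_iff₀ ht]
  nlinarith [key]

lemma inverse_facts {μ : ℝ} [FiniteDimensional ℝ E] (hμ : 0 < μ) {H : E →L[ℝ] E}
    (hcoer : ∀ v : E, μ * ‖v‖ ^ 2 ≤ ⟪H v, v⟫) :
    (∀ u : E, H (H.inverse u) = u) ∧ (∀ w : E, H.inverse (H w) = w)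
      ∧ (∀ u : E, ‖H.inverse u‖ ≤ μ⁻¹ * ‖u‖) := by
  have hlow : ∀ v : E, μ * ‖v‖ ≤ ‖H v‖ := by
    intro v
    rcases eq_or_ne v 0 with rfl | hv
    · simp
    · have h1 := hcoer v
      have h2 : ⟪H v, v⟫ ≤ ‖H v‖ * ‖v‖ := real_inner_le_norm _ _
      have h3 : (0:ℝ) < ‖v‖ := norm_pos_iff.mpr hv
      nlinarith
  have hinj : Function.Injective H := by
    intro v w hvw
    have hz : H (v - w) = 0 := by rw [map_sub, hvw, sub_self]
    have hl := hlow (v - w)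
    rw [hz, norm_zero] at hl
    have h4 : ‖v - w‖ ≤ 0 := by nlinarith [norm_nonneg (v - w)]
    exact sub_eq_zero.mp (norm_le_zero_iff.mp h4)
  have hsurj : Function.Surjective H.toLinearMap :=
    LinearMap.injective_iff_surjective.mp hinj
  let eq : E ≃ₗ[ℝ] E := LinearEquiv.ofBijective H.toLinearMap ⟨hinj, hsurj⟩
  let e : E ≃L[ℝ] E := eq.toContinuousLinearEquiv
  have hcoe : (e : E →L[ℝ] E) = H := by ext v; rfl
  have hinv : H.inverse = (e.symm : E →L[ℝ] E) := by
    rw [← hcoe, ContinuousLinearMap.inverse_equiv]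
  refine ⟨?_, ?_, ?_⟩
  · intro u
    rw [hinv]
    have : H (e.symm u) = e (e.symm u) := by rw [← hcoe]; rfl
    simp [this]
  · intro w
    rw [hinv]
    have : H w = e w := by rw [← hcoe]; rfl
    simp [this]
  · intro u
    rw [hinv]
    have h5 := hlow (e.symm u)
    have h6 : H ((e.symm : E →L[ℝ] E) u) = u := by
      have : H (e.symm u) = e (e.symm u) := by rw [← hcoe]; rfl
      simp [this]
    rw [show ((e.symm : E →L[ℝ] E) u) = e.symm u from rfl] at *
    rw [h6] at h5
    calc ‖(e.symm : E →L[ℝ] E) u‖ = ‖e.symm u‖ := rfl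
    _ ≤ μ⁻¹ * ‖u‖ := by
        rw [← mul_le_mul_iff_right₀ hμ, ← mul_assoc, mul_inv_cancel₀ (ne_of_gt hμ), one_mul]
        exact h5


end


local notation "⟪" x ", " y "⟫" => @inner ℝ _ _ x y

/-- the map v*(x) = (∇²_{yy} g(x,y*(x)))⁻¹ ∇_y f(x,y*(x)) is
Lipschitz with constant √(1+κ²)(ℓ_{f,0}ℓ_{g,2}/μ² + ℓ_{f,1}/μ), κ = ℓ_{g,1}/μ. -/
theorem statement_6 {m n : ℕ}
    (f g : EuclideanSpace ℝ (Fin m) × EuclideanSpace ℝ (Fin n) → ℝ)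
    (μ ℓf0 ℓf1 ℓg1 ℓg2 : ℝ)
    (hμ : 0 < μ) (hℓf0 : 0 < ℓf0) (hℓf1 : 0 < ℓf1) (hℓg1 : 0 < ℓg1) (hℓg2 : 0 < ℓg2)
    (hf : ContDiff ℝ 1 f) (hg : ContDiff ℝ 2 g)
    (ystar : EuclideanSpace ℝ (Fin m) → EuclideanSpace ℝ (Fin n))
    -- μ-strong convexity of y ↦ g(x,y)
    (hsc : ∀ x, ConvexOn ℝ Set.univ (fun y => g (x, y) - μ / 2 * ‖y‖ ^ 2))
    -- y*(x) is the unique minimizer of y ↦ g(x,y)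
    (hmin : ∀ x y, g (x, ystar x) ≤ g (x, y))
    (huniq : ∀ x y, (∀ z, g (x, y) ≤ g (x, z)) → y = ystar x)
    -- f is ℓ_{f,0}-Lipschitz in the joint variable
    (hflip : ∀ p q : EuclideanSpace ℝ (Fin m) × EuclideanSpace ℝ (Fin n),
      |f p - f q| ≤ ℓf0 * Real.sqrt (‖p.1 - q.1‖ ^ 2 + ‖p.2 - q.2‖ ^ 2))
    -- ∇f is ℓ_{f,1}-Lipschitz in the joint variable
    (hgradflip : ∀ p q : EuclideanSpace ℝ (Fin m) × EuclideanSpace ℝ (Fin n),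
      Real.sqrt (‖gradx f p - gradx f q‖ ^ 2 + ‖grady f p - grady f q‖ ^ 2)
        ≤ ℓf1 * Real.sqrt (‖p.1 - q.1‖ ^ 2 + ‖p.2 - q.2‖ ^ 2))
    -- ∇g is ℓ_{g,1}-Lipschitz in the joint variable
    (hglip : ∀ p q : EuclideanSpace ℝ (Fin m) × EuclideanSpace ℝ (Fin n),
      Real.sqrt (‖gradx g p - gradx g q‖ ^ 2 + ‖grady g p - grady g q‖ ^ 2)
        ≤ ℓg1 * Real.sqrt (‖p.1 - q.1‖ ^ 2 + ‖p.2 - q.2‖ ^ 2))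
    -- ∇²_{xy} g and ∇²_{yy} g are ℓ_{g,2}-Lipschitz in operator norm
    (hcrosslip : ∀ p q : EuclideanSpace ℝ (Fin m) × EuclideanSpace ℝ (Fin n),
      ‖crossxy g p - crossxy g q‖
        ≤ ℓg2 * Real.sqrt (‖p.1 - q.1‖ ^ 2 + ‖p.2 - q.2‖ ^ 2))
    (hhesslip : ∀ p q : EuclideanSpace ℝ (Fin m) × EuclideanSpace ℝ (Fin n),
      ‖hessyy g p - hessyy g q‖
        ≤ ℓg2 * Real.sqrt (‖p.1 - q.1‖ ^ 2 + ‖p.2 - q.2‖ ^ 2))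
    (vstar : EuclideanSpace ℝ (Fin m) → EuclideanSpace ℝ (Fin n))
    (hvstar : ∀ x, vstar x = (hessyy g (x, ystar x)).inverse (grady f (x, ystar x))) :
    ∀ x x', ‖vstar x - vstar x'‖ ≤
      Real.sqrt (1 + (ℓg1 / μ) ^ 2) * (ℓf0 * ℓg2 / μ ^ 2 + ℓf1 / μ) * ‖x - x'‖ := by
  intro x x'
  have hgd : Differentiable ℝ g := hg.differentiable (by norm_num)
  have hfd : Differentiable ℝ f := hf.differentiable (by norm_num)
  have hinr : ∀ (a : EuclideanSpace ℝ (Fin m)) (b : EuclideanSpace ℝ (Fin n)),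
      HasFDerivAt (fun y' => (a, y'))
        (ContinuousLinearMap.inr ℝ (EuclideanSpace ℝ (Fin m)) (EuclideanSpace ℝ (Fin n))) b := by
    intro a b
    have h := (ContinuousLinearMap.hasFDerivAt (x := b)
      (ContinuousLinearMap.inr ℝ (EuclideanSpace ℝ (Fin m)) (EuclideanSpace ℝ (Fin n)))).const_add
      ((a, (0 : EuclideanSpace ℝ (Fin n))))
    refine h.congr_of_eventuallyEq (Filter.Eventually.of_forall fun y => ?_)
    simp [Prod.ext_iff]
  have hpartg : ∀ (a : EuclideanSpace ℝ (Fin m)) (b : EuclideanSpace ℝ (Fin n)),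
      HasFDerivAt (fun y' => g (a, y'))
      ((fderiv ℝ g (a, b)).comp (ContinuousLinearMap.inr ℝ _ _)) b := fun a b =>
    ((hgd (a, b)).hasFDerivAt).comp b (hinr a b)
  have hpartf : ∀ (a : EuclideanSpace ℝ (Fin m)) (b : EuclideanSpace ℝ (Fin n)),
      HasFDerivAt (fun y' => f (a, y'))
      ((fderiv ℝ f (a, b)).comp (ContinuousLinearMap.inr ℝ _ _)) b := fun a b =>
    ((hfd (a, b)).hasFDerivAt).comp b (hinr a b)
  -- strong monotonicity of y ↦ ∇_y g (a, y)
  have hmono : ∀ (a : EuclideanSpace ℝ (Fin m)) (y1 y2 : EuclideanSpace ℝ (Fin n)),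
      μ * ‖y1 - y2‖ ^ 2 ≤ ⟪grady g (a, y1) - grady g (a, y2), y1 - y2⟫ := by
    intro a y1 y2
    have hdiffa : Differentiable ℝ (fun y => g (a, y)) := fun b => (hpartg a b).differentiableAt
    exact strong_mono_s6 (hsc a) hdiffa y1 y2
  -- C¹ smoothness of y ↦ ∇_y g (a, y) and the Hessian as its derivative
  have hfg : ContDiff ℝ 1 (fderiv ℝ g) := hg.fderiv_right (by norm_num)
  have hφc : ∀ a : EuclideanSpace ℝ (Fin m), ContDiff ℝ 1 (fun y => grady g (a, y)) := by
    intro a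
    have heq : (fun y => grady g (a, y))
        = fun y => (InnerProductSpace.toDual ℝ (EuclideanSpace ℝ (Fin n))).symm
            (((ContinuousLinearMap.compL ℝ (EuclideanSpace ℝ (Fin n))
              (EuclideanSpace ℝ (Fin m) × EuclideanSpace ℝ (Fin n)) ℝ).flip
              (ContinuousLinearMap.inr ℝ _ _)) (fderiv ℝ g (a, y))) := by
      funext y
      show gradient (fun y' => g (a, y')) y = _
      unfold gradient
      congr 1
      rw [(hpartg a y).fderiv]
      rfl
    rw [heq]
    exact (LinearIsometryEquiv.contDiff _).comp ((ContinuousLinearMap.contDiff _).comp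
      (hfg.comp (contDiff_const.prodMk contDiff_id)))
  have hHd : ∀ (a : EuclideanSpace ℝ (Fin m)) (b : EuclideanSpace ℝ (Fin n)),
      HasFDerivAt (fun y => grady g (a, y)) (hessyy g (a, b)) b := by
    intro a b
    exact ((hφc a).differentiable (by norm_num) b).hasFDerivAt
  -- coercivity of the Hessian
  have hcoer : ∀ (a : EuclideanSpace ℝ (Fin m)) (b : EuclideanSpace ℝ (Fin n))
      (v : EuclideanSpace ℝ (Fin n)), μ * ‖v‖ ^ 2 ≤ ⟪hessyy g (a, b) v, v⟫ := fun a b v =>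
    coercive_of_strong_mono (hHd a b) (hmono a) v
  obtain ⟨hAr, hAl, hAb⟩ := inverse_facts hμ (fun v => hcoer x (ystar x) v)
  obtain ⟨hBr, hBl, hBb⟩ := inverse_facts hμ (fun v => hcoer x' (ystar x') v)
  -- the gradient vanishes at the minimizer
  have hgrad0 : ∀ a : EuclideanSpace ℝ (Fin m), grady g (a, ystar a) = 0 := by
    intro a
    have hloc : IsLocalMin (fun y => g (a, y)) (ystar a) :=
      Filter.Eventually.of_forall (fun y => hmin a y)
    have hfd0 : fderiv ℝ (fun y => g (a, y)) (ystar a) = 0 := hloc.fderiv_eq_zero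
    show gradient (fun y => g (a, y)) (ystar a) = 0
    unfold gradient
    rw [hfd0]
    simp
  -- elementary sqrt facts
  have sq_le : ∀ a b : ℝ, 0 ≤ b → b ≤ Real.sqrt (a ^ 2 + b ^ 2) := by
    intro a b hb
    calc b = Real.sqrt (b ^ 2) := (Real.sqrt_sq hb).symm
    _ ≤ Real.sqrt (a ^ 2 + b ^ 2) := Real.sqrt_le_sqrt (by nlinarith)
  -- Lipschitzness of y*
  have hylip : ∀ a a' : EuclideanSpace ℝ (Fin m),
      μ * ‖ystar a - ystar a'‖ ≤ ℓg1 * ‖a - a'‖ := by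
    intro a a'
    rcases eq_or_ne (ystar a) (ystar a') with heq | hne
    · rw [heq, sub_self, norm_zero, mul_zero]
      positivity
    · have key := hmono a (ystar a) (ystar a')
      rw [hgrad0 a] at key
      have h0 : (0 : EuclideanSpace ℝ (Fin n)) - grady g (a, ystar a')
          = grady g (a', ystar a') - grady g (a, ystar a') := by rw [hgrad0 a']
      rw [h0] at key
      have hcs := real_inner_le_norm (grady g (a', ystar a') - grady g (a, ystar a'))
        (ystar a - ystar a')
      have h1 : ‖grady g (a', ystar a') - grady g (a, ystar a')‖ ≤ ℓg1 * ‖a' - a‖ := by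
        have h2 := hglip (a', ystar a') (a, ystar a')
        simp only [sub_self, norm_zero] at h2
        have h3 := sq_le (‖gradx g (a', ystar a') - gradx g (a, ystar a')‖)
          (‖grady g (a', ystar a') - grady g (a, ystar a')‖) (norm_nonneg _)
        calc ‖grady g (a', ystar a') - grady g (a, ystar a')‖
            ≤ Real.sqrt (‖gradx g (a', ystar a') - gradx g (a, ystar a')‖ ^ 2
              + ‖grady g (a', ystar a') - grady g (a, ystar a')‖ ^ 2) := h3
        _ ≤ ℓg1 * Real.sqrt (‖a' - a‖ ^ 2 + 0 ^ 2) := h2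
        _ = ℓg1 * ‖a' - a‖ := by
            rw [show ‖a' - a‖ ^ 2 + (0:ℝ) ^ 2 = ‖a' - a‖ ^ 2 by ring,
              Real.sqrt_sq (norm_nonneg _)]
      have hpos : 0 < ‖ystar a - ystar a'‖ := norm_pos_iff.mpr (sub_ne_zero.mpr hne)
      have hrev : ‖a' - a‖ = ‖a - a'‖ := norm_sub_rev _ _
      rw [hrev] at h1
      nlinarith [key, hcs, h1, hpos, norm_nonneg (grady g (a', ystar a') - grady g (a, ystar a'))]
  -- bound on ∇_y f
  have hfb : ∀ p : EuclideanSpace ℝ (Fin m) × EuclideanSpace ℝ (Fin n),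
      ‖grady f p‖ ≤ ℓf0 := by
    intro p
    have hd : HasFDerivAt (fun y => f (p.1, y)) (fderiv ℝ (fun y => f (p.1, y)) p.2) p.2 :=
      (hpartf p.1 p.2).differentiableAt.hasFDerivAt
    have hb : ‖fderiv ℝ (fun y => f (p.1, y)) p.2‖ ≤ ℓf0 := by
      refine hd.le_of_lip' (le_of_lt hℓf0) ?_
      filter_upwards with y
      have h5 := hflip (p.1, y) (p.1, p.2)
      simp only [sub_self, norm_zero] at h5
      calc ‖f (p.1, y) - f (p.1, p.2)‖ = |f (p.1, y) - f (p.1, p.2)| := rfl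
      _ ≤ ℓf0 * Real.sqrt (0 ^ 2 + ‖y - p.2‖ ^ 2) := h5
      _ = ℓf0 * ‖y - p.2‖ := by
          rw [show (0:ℝ) ^ 2 + ‖y - p.2‖ ^ 2 = ‖y - p.2‖ ^ 2 by ring,
            Real.sqrt_sq (norm_nonneg _)]
    show ‖gradient (fun y => f (p.1, y)) p.2‖ ≤ ℓf0
    rw [norm_gradient_eq]
    exact hb
  -- assembly
  set A := hessyy g (x, ystar x) with hA
  set B := hessyy g (x', ystar x') with hB
  set u := grady f (x, ystar x) with hu
  set u' := grady f (x', ystar x') with hu'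
  set d := Real.sqrt (‖x - x'‖ ^ 2 + ‖ystar x - ystar x'‖ ^ 2) with hd
  have hd0 : (0:ℝ) ≤ d := Real.sqrt_nonneg _
  have hident : vstar x - vstar x'
      = A.inverse (u - u') + A.inverse ((B - A) (B.inverse u')) := by
    rw [hvstar x, hvstar x']
    have e1 : (B - A) (B.inverse u') = u' - A (B.inverse u') := by
      rw [ContinuousLinearMap.sub_apply, hBr u']
    rw [e1, map_sub, map_sub, hAl]
    abel
  have h1 : ‖u - u'‖ ≤ ℓf1 * d := by
    have h6 := hgradflip (x, ystar x) (x', ystar x')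
    have h7 := sq_le (‖gradx f (x, ystar x) - gradx f (x', ystar x')‖) (‖u - u'‖)
      (norm_nonneg _)
    exact le_trans h7 h6
  have h2 : ‖B - A‖ ≤ ℓg2 * d := by
    have h8 := hhesslip (x', ystar x') (x, ystar x)
    have h9 : ‖x' - x‖ = ‖x - x'‖ := norm_sub_rev _ _
    have h10 : ‖ystar x' - ystar x‖ = ‖ystar x - ystar x'‖ := norm_sub_rev _ _
    rw [h9, h10] at h8
    exact h8
  have h3 : ‖B.inverse u'‖ ≤ μ⁻¹ * ℓf0 := by
    calc ‖B.inverse u'‖ ≤ μ⁻¹ * ‖u'‖ := hBb u'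
    _ ≤ μ⁻¹ * ℓf0 := by
        have := hfb (x', ystar x')
        exact mul_le_mul_of_nonneg_left this (by positivity)
  have hμi : (0:ℝ) ≤ μ⁻¹ := by positivity
  have hbound : ‖vstar x - vstar x'‖ ≤ (ℓf0 * ℓg2 / μ ^ 2 + ℓf1 / μ) * d := by
    calc ‖vstar x - vstar x'‖
        ≤ ‖A.inverse (u - u')‖ + ‖A.inverse ((B - A) (B.inverse u'))‖ := by
          rw [hident]; exact norm_add_le _ _
    _ ≤ μ⁻¹ * ‖u - u'‖ + μ⁻¹ * ‖(B - A) (B.inverse u')‖ :=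
        add_le_add (hAb _) (hAb _)
    _ ≤ μ⁻¹ * (ℓf1 * d) + μ⁻¹ * (‖B - A‖ * ‖B.inverse u'‖) := by
        gcongr
        exact (B - A).le_opNorm _
    _ ≤ μ⁻¹ * (ℓf1 * d) + μ⁻¹ * ((ℓg2 * d) * (μ⁻¹ * ℓf0)) := by
        have h11 : ‖B - A‖ * ‖B.inverse u'‖ ≤ (ℓg2 * d) * (μ⁻¹ * ℓf0) :=
          mul_le_mul h2 h3 (norm_nonneg _) (mul_nonneg (le_of_lt hℓg2) hd0)
        exact add_le_add (le_refl _) (mul_le_mul_of_nonneg_left h11 hμi)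
    _ = (ℓf0 * ℓg2 / μ ^ 2 + ℓf1 / μ) * d := by
        field_simp
        ring
  have hdle : d ≤ Real.sqrt (1 + (ℓg1 / μ) ^ 2) * ‖x - x'‖ := by
    have hyl : ‖ystar x - ystar x'‖ ≤ (ℓg1 / μ) * ‖x - x'‖ := by
      have := hylip x x'
      rw [div_mul_eq_mul_div, le_div_iff₀ hμ]
      nlinarith [this]
    have hsq : ‖x - x'‖ ^ 2 + ‖ystar x - ystar x'‖ ^ 2
        ≤ (1 + (ℓg1 / μ) ^ 2) * ‖x - x'‖ ^ 2 := by
      nlinarith [hyl, norm_nonneg (ystar x - ystar x'), norm_nonneg (x - x'),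
        sq_nonneg (ℓg1 / μ)]
    calc d ≤ Real.sqrt ((1 + (ℓg1 / μ) ^ 2) * ‖x - x'‖ ^ 2) := Real.sqrt_le_sqrt hsq
    _ = Real.sqrt (1 + (ℓg1 / μ) ^ 2) * ‖x - x'‖ := by
        rw [Real.sqrt_mul (by positivity), Real.sqrt_sq (norm_nonneg _)]
  have hC : (0:ℝ) ≤ ℓf0 * ℓg2 / μ ^ 2 + ℓf1 / μ := by positivity
  calc ‖vstar x - vstar x'‖ ≤ (ℓf0 * ℓg2 / μ ^ 2 + ℓf1 / μ) * d := hbound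
  _ ≤ (ℓf0 * ℓg2 / μ ^ 2 + ℓf1 / μ) * (Real.sqrt (1 + (ℓg1 / μ) ^ 2) * ‖x - x'‖) :=
      mul_le_mul_of_nonneg_left hdle hC
  _ = Real.sqrt (1 + (ℓg1 / μ) ^ 2) * (ℓf0 * ℓg2 / μ ^ 2 + ℓf1 / μ) * ‖x - x'‖ := by ring
end

section
/- In the Euclidean bilevel setting below, for every x ∈ ℝ^m, y ∈ ℝ^n and v ∈ ℝ^n, the hypergradient estimate h := ∇_x f(x,y) − (∇²_{xy} g(x,y))* v satisfies ‖h − ∇Φ(x)‖ ≤ ( ℓ_{f,1} + ℓ_{f,0} ℓ_{g,2}/μ ) ‖y − y*(x)‖ + ℓ_{g,1} ‖v − v*(x)‖, where v*(x) := (∇²_{yy} g(x, y*(x)))⁻¹ ∇_y f(x, y*(x)) and ∇Φ(x) = ∇_x f(x, y*(x)) − (∇²_{xy} g(x, y*(x)))* v*(x). -/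
open Set InnerProductSpace Filter Topology


lemma convex_fderiv_le' {E : Type*} [NormedAddCommGroup E] [NormedSpace ℝ E]
    {φ : E → ℝ} {a : E} (b : E) {D : E →L[ℝ] ℝ}
    (hconv : ConvexOn ℝ Set.univ φ) (hD : HasFDerivAt φ D a) :
    D (b - a) ≤ φ b - φ a := by
  set q : ℝ → ℝ := fun t => φ (a + t • (b - a)) with hq
  have hline : HasDerivAt (fun t : ℝ => a + t • (b - a)) (b - a) 0 := by
    simpa using ((hasDerivAt_id (0:ℝ)).smul_const (b - a)).const_add a
  have hDa : HasFDerivAt φ D (a + (0:ℝ) • (b - a)) := by simpa using hD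
  have hq0 : HasDerivAt q (D (b - a)) 0 := hDa.comp_hasDerivAt 0 hline
  have hqc : ConvexOn ℝ Set.univ q := by
    refine ⟨convex_univ, fun t1 _ t2 _ c d hc hd hcd => ?_⟩
    have key : a + (c • t1 + d • t2) • (b - a)
        = c • (a + t1 • (b - a)) + d • (a + t2 • (b - a)) := by
      match_scalars <;> (simp only [smul_eq_mul]; linarith [hcd])
    calc q (c • t1 + d • t2) = φ (c • (a + t1 • (b - a)) + d • (a + t2 • (b - a))) := by
          rw [hq]; simp only [key]
      _ ≤ c * φ (a + t1 • (b - a)) + d * φ (a + t2 • (b - a)) :=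
          hconv.2 (mem_univ _) (mem_univ _) hc hd hcd
      _ = c • q t1 + d • q t2 := rfl
  have := hqc.le_slope_of_hasDerivAt (mem_univ (0:ℝ)) (mem_univ (1:ℝ)) one_pos hq0
  rw [slope_def_field] at this
  simpa [q] using this

lemma strong_coercive' {E : Type*} [NormedAddCommGroup E] [InnerProductSpace ℝ E]
    [CompleteSpace E] {c : E → ℝ} {μ : ℝ} (hc : ContDiff ℝ 2 c)
    (hsc : ConvexOn ℝ Set.univ (fun y => c y - μ / 2 * ‖y‖ ^ 2)) (y₀ v : E) :
    μ * ‖v‖ ^ 2 ≤ inner ℝ ((fderiv ℝ (fun y => gradient c y) y₀) v) v := by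
  have hd : Differentiable ℝ c := hc.differentiable (by norm_num)
  -- first-order strong monotonicity
  have hφ : ∀ a : E, HasFDerivAt (fun y => c y - μ / 2 * ‖y‖ ^ 2)
      (fderiv ℝ c a - (μ/2) • (2 • innerSL ℝ a)) a := by
    intro a
    exact (hd a).hasFDerivAt.sub ((hasStrictFDerivAt_norm_sq a).hasFDerivAt.const_mul (μ/2))
  have mono : ∀ a b : E, μ * ‖b - a‖ ^ 2
      ≤ fderiv ℝ c b (b - a) - fderiv ℝ c a (b - a) := by
    intro a b
    have h1 := convex_fderiv_le' b hsc (hφ a)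
    have h2 := convex_fderiv_le' a hsc (hφ b)
    rw [show a - b = -(b - a) by abel, map_neg] at h2
    simp only [ContinuousLinearMap.sub_apply, ContinuousLinearMap.smul_apply,
      ContinuousLinearMap.neg_apply, innerSL_apply_apply, smul_eq_mul, nsmul_eq_mul,
      Nat.cast_ofNat] at h1 h2
    have hib : (inner ℝ b (b-a) : ℝ) - inner ℝ a (b-a) = ‖b - a‖ ^ 2 := by
      rw [← inner_sub_left, real_inner_self_eq_norm_sq]
    have hmu : μ * (inner ℝ b (b-a) - inner ℝ a (b-a) : ℝ) = μ * ‖b - a‖ ^ 2 := by rw [hib]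
    linarith [h1, h2, hmu]
  -- gradient map and its derivative
  set G : E → E := fun y => gradient c y with hGdef
  have hfd1 : ContDiff ℝ 1 (fderiv ℝ c) := hc.fderiv_right (by norm_num)
  have hGc : ContDiff ℝ 1 G := (toDual ℝ E).symm.contDiff.comp hfd1
  have hGdiff : DifferentiableAt ℝ G y₀ := (hGc.differentiable (by norm_num)) y₀
  set H : E →L[ℝ] E := fderiv ℝ G y₀ with hH
  have hHf : HasFDerivAt G H y₀ := hGdiff.hasFDerivAt
  have hinner : ∀ (y w : E), (inner ℝ (G y) w : ℝ) = fderiv ℝ c y w := by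
    intro y w
    have : (toDual ℝ E) (G y) = fderiv ℝ c y := (toDual ℝ E).apply_symm_apply _
    rw [← this]; rfl
  -- directional function
  set s : ℝ → ℝ := fun t => inner ℝ v (G (y₀ + t • v)) with hs
  have hline : ∀ t : ℝ, HasDerivAt (fun t : ℝ => y₀ + t • v) v t := by
    intro t; simpa using ((hasDerivAt_id t).smul_const v).const_add y₀
  have hG0 : HasDerivAt (fun t : ℝ => G (y₀ + t • v)) (H v) 0 := by
    have : HasFDerivAt G H (y₀ + (0:ℝ) • v) := by simpa using hHf
    exact this.comp_hasDerivAt 0 (hline 0)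
  have hsder : HasDerivAt s ((innerSL ℝ v) (H v)) 0 :=
    (innerSL ℝ v).hasFDerivAt.comp_hasDerivAt 0 hG0
  have hslope : ∀ t : ℝ, 0 < t → μ * ‖v‖ ^ 2 ≤ slope s 0 t := by
    intro t ht
    have hm := mono y₀ (y₀ + t • v)
    have hba : y₀ + t • v - y₀ = t • v := by abel
    rw [hba] at hm
    have hnorm : ‖t • v‖ ^ 2 = t^2 * ‖v‖ ^ 2 := by
      rw [norm_smul]; simp [mul_pow, Real.norm_eq_abs, sq_abs]
    have hmap : ∀ y : E, fderiv ℝ c y (t • v) = t * fderiv ℝ c y v := by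
      intro y; rw [map_smul]; rfl
    rw [hnorm, hmap, hmap] at hm
    have hst : s t - s 0 = fderiv ℝ c (y₀ + t • v) v - fderiv ℝ c y₀ v := by
      simp only [hs, zero_smul, add_zero]
      rw [← inner_sub_right, real_inner_comm, ← hinner, ← hinner, inner_sub_left]
    rw [slope_def_field, sub_zero, hst, le_div_iff₀ ht]
    nlinarith [hm]
  have htend : Tendsto (slope s 0) (𝓝[>] (0:ℝ)) (𝓝 ((innerSL ℝ v) (H v))) :=
    (hasDerivAt_iff_tendsto_slope.mp hsder).mono_left
      (nhdsWithin_mono 0 (fun t ht => Set.mem_compl_singleton_iff.mpr (ne_of_gt ht)))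
  have hfin : μ * ‖v‖ ^ 2 ≤ (innerSL ℝ v) (H v) :=
    ge_of_tendsto htend (eventually_nhdsWithin_of_forall (fun t ht => hslope t ht))
  calc μ * ‖v‖ ^ 2 ≤ (innerSL ℝ v) (H v) := hfin
    _ = inner ℝ (H v) v := real_inner_comm _ _
    _ = inner ℝ ((fderiv ℝ (fun y => gradient c y) y₀) v) v := rfl

lemma inverse_norm_le' {E : Type*} [NormedAddCommGroup E] [InnerProductSpace ℝ E]
    [CompleteSpace E] {H : E →L[ℝ] E} {μ : ℝ} (hμ : 0 < μ)
    (hco : ∀ v, μ * ‖v‖ ^ 2 ≤ (inner ℝ (H v) v : ℝ)) (w : E) :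
    ‖H.inverse w‖ ≤ ‖w‖ / μ := by
  have hlow : ∀ v, μ * ‖v‖ ≤ ‖H v‖ := by
    intro v
    rcases eq_or_ne v 0 with rfl | hv
    · simp
    · have h1 := hco v
      have h2 := real_inner_le_norm (H v) v
      have h3 : 0 < ‖v‖ := norm_pos_iff.mpr hv
      nlinarith
  by_cases h : H.IsInvertible
  · obtain ⟨e, he⟩ := h
    rw [← he, ContinuousLinearMap.inverse_equiv]
    have hHu : H (e.symm w) = w := by
      rw [← he]; exact e.apply_symm_apply w
    have := hlow (e.symm w)
    rw [hHu] at this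
    rw [le_div_iff₀ hμ]
    calc ‖(e.symm : E →L[ℝ] E) w‖ * μ = μ * ‖e.symm w‖ := by
          rw [mul_comm]; rfl
      _ ≤ ‖w‖ := this
  · rw [ContinuousLinearMap.inverse_of_not_isInvertible h]
    simp only [ContinuousLinearMap.zero_apply, norm_zero]
    positivity

-- norm ≤ sqrt of sum of squares helpers
lemma le_sqrt_left (a b : ℝ) (ha : 0 ≤ a) : a ≤ Real.sqrt (a ^ 2 + b ^ 2) := by
  rw [show a = Real.sqrt (a ^ 2) from (Real.sqrt_sq ha).symm]
  exact Real.sqrt_le_sqrt (by nlinarith [sq_nonneg b, Real.sq_sqrt (sq_nonneg a)])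

lemma le_sqrt_right (a b : ℝ) (hb : 0 ≤ b) : b ≤ Real.sqrt (a ^ 2 + b ^ 2) := by
  rw [show b = Real.sqrt (b ^ 2) from (Real.sqrt_sq hb).symm]
  exact Real.sqrt_le_sqrt (by nlinarith [sq_nonneg a, Real.sq_sqrt (sq_nonneg b)])

/-- hypergradient-estimate error bound
‖(∇_x f(x,y) − (∇²_{xy} g(x,y))* v) − ∇Φ(x)‖
  ≤ (ℓ_{f,1} + ℓ_{f,0}ℓ_{g,2}/μ)‖y − y*(x)‖ + ℓ_{g,1}‖v − v*(x)‖. -/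
theorem statement_8 {m n : ℕ}
    (f g : EuclideanSpace ℝ (Fin m) × EuclideanSpace ℝ (Fin n) → ℝ)
    (μ ℓf0 ℓf1 ℓg1 ℓg2 : ℝ)
    (hμ : 0 < μ) (hℓf0 : 0 < ℓf0) (hℓf1 : 0 < ℓf1) (hℓg1 : 0 < ℓg1) (hℓg2 : 0 < ℓg2)
    (hf : ContDiff ℝ 1 f) (hg : ContDiff ℝ 2 g)
    (ystar : EuclideanSpace ℝ (Fin m) → EuclideanSpace ℝ (Fin n))
    -- μ-strong convexity of y ↦ g(x,y)
    (hsc : ∀ x, ConvexOn ℝ Set.univ (fun y => g (x, y) - μ / 2 * ‖y‖ ^ 2))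
    -- y*(x) is the unique minimizer of y ↦ g(x,y)
    (hmin : ∀ x y, g (x, ystar x) ≤ g (x, y))
    (huniq : ∀ x y, (∀ z, g (x, y) ≤ g (x, z)) → y = ystar x)
    (hystar : Differentiable ℝ ystar)
    (Φ : EuclideanSpace ℝ (Fin m) → ℝ)
    (hΦ : ∀ x, Φ x = f (x, ystar x))
    -- f is ℓ_{f,0}-Lipschitz in the joint variable
    (hflip : ∀ p q : EuclideanSpace ℝ (Fin m) × EuclideanSpace ℝ (Fin n),
      |f p - f q| ≤ ℓf0 * Real.sqrt (‖p.1 - q.1‖ ^ 2 + ‖p.2 - q.2‖ ^ 2))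
    -- ∇f is ℓ_{f,1}-Lipschitz in the joint variable
    (hgradflip : ∀ p q : EuclideanSpace ℝ (Fin m) × EuclideanSpace ℝ (Fin n),
      Real.sqrt (‖gradx f p - gradx f q‖ ^ 2 + ‖grady f p - grady f q‖ ^ 2)
        ≤ ℓf1 * Real.sqrt (‖p.1 - q.1‖ ^ 2 + ‖p.2 - q.2‖ ^ 2))
    -- ∇g is ℓ_{g,1}-Lipschitz in the joint variable (so ‖∇²_{xy} g‖_op ≤ ℓ_{g,1})
    (hglip : ∀ p q : EuclideanSpace ℝ (Fin m) × EuclideanSpace ℝ (Fin n),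
      Real.sqrt (‖gradx g p - gradx g q‖ ^ 2 + ‖grady g p - grady g q‖ ^ 2)
        ≤ ℓg1 * Real.sqrt (‖p.1 - q.1‖ ^ 2 + ‖p.2 - q.2‖ ^ 2))
    -- ∇²_{xy} g is ℓ_{g,2}-Lipschitz in operator norm
    (hcrosslip : ∀ p q : EuclideanSpace ℝ (Fin m) × EuclideanSpace ℝ (Fin n),
      ‖crossxy g p - crossxy g q‖
        ≤ ℓg2 * Real.sqrt (‖p.1 - q.1‖ ^ 2 + ‖p.2 - q.2‖ ^ 2))
    -- v*(x) = (∇²_{yy} g(x,y*(x)))⁻¹ ∇_y f(x,y*(x))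
    (vstar : EuclideanSpace ℝ (Fin m) → EuclideanSpace ℝ (Fin n))
    (hvstar : ∀ x, vstar x = (hessyy g (x, ystar x)).inverse (grady f (x, ystar x)))
    -- hypergradient formula
    (hgradΦ : ∀ x, gradient Φ x = gradx f (x, ystar x) -
      (ContinuousLinearMap.adjoint (crossxy g (x, ystar x))) (vstar x)) :
    ∀ (x : EuclideanSpace ℝ (Fin m)) (y v : EuclideanSpace ℝ (Fin n)),
      ‖(gradx f (x, y) - (ContinuousLinearMap.adjoint (crossxy g (x, y))) v)
          - gradient Φ x‖
        ≤ (ℓf1 + ℓf0 * ℓg2 / μ) * ‖y - ystar x‖ + ℓg1 * ‖v - vstar x‖ := by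
  intro x y v
  set y₀ := ystar x with hy₀
  set A1 := crossxy g (x, y) with hA1
  set A0 := crossxy g (x, y₀) with hA0
  set gx1 := gradx f (x, y) with hgx1
  set gx0 := gradx f (x, y₀) with hgx0
  set vs := vstar x with hvs
  -- bound on ‖gx1 - gx0‖
  have hb1 : ‖gx1 - gx0‖ ≤ ℓf1 * ‖y - y₀‖ := by
    have h := hgradflip (x, y) (x, y₀)
    simp only [sub_self, norm_zero] at h
    have h' : Real.sqrt (‖gx1 - gx0‖ ^ 2 + ‖grady f (x, y) - grady f (x, y₀)‖ ^ 2)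
        ≤ ℓf1 * ‖y - y₀‖ := by
      calc _ ≤ ℓf1 * Real.sqrt ((0:ℝ) ^ 2 + ‖y - y₀‖ ^ 2) := h
        _ = ℓf1 * ‖y - y₀‖ := by
            rw [show (0:ℝ) ^ 2 + ‖y - y₀‖ ^ 2 = ‖y - y₀‖ ^ 2 by ring,
              Real.sqrt_sq (norm_nonneg _)]
    exact le_trans (le_sqrt_left _ _ (norm_nonneg _)) h'
  -- operator norm bound on A1
  have hb2 : ‖A1‖ ≤ ℓg1 := by
    have hlip : LipschitzWith ℓg1.toNNReal (fun x' : EuclideanSpace ℝ (Fin m) => grady g (x', y)) := by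
      apply LipschitzWith.of_dist_le_mul
      intro x1 x2
      rw [dist_eq_norm, dist_eq_norm, Real.coe_toNNReal _ hℓg1.le]
      have h := hglip (x1, y) (x2, y)
      simp only [sub_self, norm_zero] at h
      calc ‖grady g (x1, y) - grady g (x2, y)‖
          ≤ Real.sqrt (‖gradx g (x1, y) - gradx g (x2, y)‖ ^ 2
              + ‖grady g (x1, y) - grady g (x2, y)‖ ^ 2) :=
            le_sqrt_right _ _ (norm_nonneg _)
        _ ≤ ℓg1 * Real.sqrt (‖x1 - x2‖ ^ 2 + (0:ℝ) ^ 2) := h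
        _ = ℓg1 * ‖x1 - x2‖ := by
            rw [show ‖x1 - x2‖ ^ 2 + (0:ℝ) ^ 2 = ‖x1 - x2‖ ^ 2 by ring,
              Real.sqrt_sq (norm_nonneg _)]
    have := norm_fderiv_le_of_lipschitz ℝ hlip (x₀ := x)
    rw [Real.coe_toNNReal _ hℓg1.le] at this
    exact this
  -- cross-derivative Lipschitz bound
  have hb3 : ‖A1 - A0‖ ≤ ℓg2 * ‖y - y₀‖ := by
    have h := hcrosslip (x, y) (x, y₀)
    simp only [sub_self, norm_zero] at h
    calc ‖A1 - A0‖ ≤ ℓg2 * Real.sqrt ((0:ℝ) ^ 2 + ‖y - y₀‖ ^ 2) := h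
      _ = ℓg2 * ‖y - y₀‖ := by
          rw [show (0:ℝ) ^ 2 + ‖y - y₀‖ ^ 2 = ‖y - y₀‖ ^ 2 by ring,
            Real.sqrt_sq (norm_nonneg _)]
  -- bound on ‖vstar x‖
  have hb4 : ‖vs‖ ≤ ℓf0 / μ := by
    rw [hvs, hvstar x]
    have hc2 : ContDiff ℝ 2 (fun y' : EuclideanSpace ℝ (Fin n) => g (x, y')) :=
      hg.comp (contDiff_const.prodMk contDiff_id)
    have hco : ∀ w : EuclideanSpace ℝ (Fin n), μ * ‖w‖ ^ 2 ≤ (inner ℝ ((hessyy g (x, y₀)) w) w : ℝ) := by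
      intro w
      exact strong_coercive' hc2 (hsc x) y₀ w
    have hinv := inverse_norm_le' hμ hco (grady f (x, y₀))
    have hw : ‖grady f (x, y₀)‖ ≤ ℓf0 := by
      have hlip : LipschitzWith ℓf0.toNNReal (fun y' : EuclideanSpace ℝ (Fin n) => f (x, y')) := by
        apply LipschitzWith.of_dist_le_mul
        intro y1 y2
        rw [Real.dist_eq, dist_eq_norm, Real.coe_toNNReal _ hℓf0.le]
        have h := hflip (x, y1) (x, y2)
        simp only [sub_self, norm_zero] at h
        calc |f (x, y1) - f (x, y2)| ≤ ℓf0 * Real.sqrt ((0:ℝ) ^ 2 + ‖y1 - y2‖ ^ 2) := h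
          _ = ℓf0 * ‖y1 - y2‖ := by
              rw [show (0:ℝ) ^ 2 + ‖y1 - y2‖ ^ 2 = ‖y1 - y2‖ ^ 2 by ring,
                Real.sqrt_sq (norm_nonneg _)]
      have h1 : ‖grady f (x, y₀)‖ = ‖fderiv ℝ (fun y' : EuclideanSpace ℝ (Fin n) => f (x, y')) y₀‖ :=
        (toDual ℝ (EuclideanSpace ℝ (Fin n))).symm.norm_map _
      rw [h1]
      have := norm_fderiv_le_of_lipschitz ℝ hlip (x₀ := y₀)
      rw [Real.coe_toNNReal _ hℓf0.le] at this
      exact this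
    calc ‖(hessyy g (x, y₀)).inverse (grady f (x, y₀))‖ ≤ ‖grady f (x, y₀)‖ / μ := hinv
      _ ≤ ℓf0 / μ := by gcongr
  -- decomposition
  rw [hgradΦ x]
  have hsplit : (gx1 - (ContinuousLinearMap.adjoint A1) v)
      - (gx0 - (ContinuousLinearMap.adjoint A0) vs)
      = (gx1 - gx0) - (ContinuousLinearMap.adjoint A1) (v - vs)
        - (ContinuousLinearMap.adjoint (A1 - A0)) vs := by
    rw [map_sub ContinuousLinearMap.adjoint A1 A0]
    simp only [map_sub, ContinuousLinearMap.sub_apply]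
    abel
  rw [hsplit]
  have hn1 : ‖(ContinuousLinearMap.adjoint A1) (v - vs)‖ ≤ ℓg1 * ‖v - vs‖ := by
    calc ‖(ContinuousLinearMap.adjoint A1) (v - vs)‖
        ≤ ‖ContinuousLinearMap.adjoint A1‖ * ‖v - vs‖ :=
          ContinuousLinearMap.le_opNorm _ _
      _ ≤ ℓg1 * ‖v - vs‖ := by
          rw [ContinuousLinearMap.adjoint.norm_map A1]
          exact mul_le_mul_of_nonneg_right hb2 (norm_nonneg _)
  have hn2 : ‖(ContinuousLinearMap.adjoint (A1 - A0)) vs‖ ≤ (ℓg2 * ‖y - y₀‖) * (ℓf0 / μ) := by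
    calc ‖(ContinuousLinearMap.adjoint (A1 - A0)) vs‖
        ≤ ‖ContinuousLinearMap.adjoint (A1 - A0)‖ * ‖vs‖ :=
          ContinuousLinearMap.le_opNorm _ _
      _ ≤ (ℓg2 * ‖y - y₀‖) * (ℓf0 / μ) := by
          rw [ContinuousLinearMap.adjoint.norm_map]
          apply mul_le_mul hb3 hb4 (norm_nonneg _)
          positivity
  calc ‖(gx1 - gx0) - (ContinuousLinearMap.adjoint A1) (v - vs)
        - (ContinuousLinearMap.adjoint (A1 - A0)) vs‖
      ≤ ‖(gx1 - gx0) - (ContinuousLinearMap.adjoint A1) (v - vs)‖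
        + ‖(ContinuousLinearMap.adjoint (A1 - A0)) vs‖ := norm_sub_le _ _
    _ ≤ ‖gx1 - gx0‖ + ‖(ContinuousLinearMap.adjoint A1) (v - vs)‖
        + ‖(ContinuousLinearMap.adjoint (A1 - A0)) vs‖ := by
        have := norm_sub_le (gx1 - gx0) ((ContinuousLinearMap.adjoint A1) (v - vs))
        linarith
    _ ≤ ℓf1 * ‖y - y₀‖ + ℓg1 * ‖v - vs‖ + (ℓg2 * ‖y - y₀‖) * (ℓf0 / μ) := by
        linarith [hb1, hn1, hn2]
    _ = (ℓf1 + ℓf0 * ℓg2 / μ) * ‖y - y₀‖ + ℓg1 * ‖v - vs‖ := by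
        field_simp; ring
end

section
/- Let Φ : ℝ^m → ℝ be differentiable with L-Lipschitz gradient, let α > 0 and let x, h ∈ ℝ^m. Then Φ(x − α h) ≤ Φ(x) − (α/2 − α² L) ‖∇Φ(x)‖² + (α/2 + α² L) ‖∇Φ(x) − h‖². -/
open InnerProductSpace intervalIntegral

local notation "⟪" x ", " y "⟫" => @inner ℝ _ _ x y

lemma grad_apply' {m : ℕ} (Φ : EuclideanSpace ℝ (Fin m) → ℝ) (u v : EuclideanSpace ℝ (Fin m)) :
    fderiv ℝ Φ u v = ⟪gradient Φ u, v⟫ := by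
  rw [gradient, ← InnerProductSpace.toDual_apply_apply, LinearIsometryEquiv.apply_symm_apply]

lemma descent' {m : ℕ} (Φ : EuclideanSpace ℝ (Fin m) → ℝ) (L : ℝ) (hL : 0 ≤ L)
    (hdiff : Differentiable ℝ Φ)
    (hlip : ∀ u w, ‖gradient Φ u - gradient Φ w‖ ≤ L * ‖u - w‖)
    (x v : EuclideanSpace ℝ (Fin m)) :
    Φ (x + v) ≤ Φ x + ⟪gradient Φ x, v⟫ + L / 2 * ‖v‖ ^ 2 := by
  have hgrad_cont : Continuous (gradient Φ) := by
    apply (LipschitzWith.of_dist_le_mul (K := L.toNNReal) ?_).continuous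
    intro u w
    simp only [dist_eq_norm]
    calc ‖gradient Φ u - gradient Φ w‖ ≤ L * ‖u - w‖ := hlip u w
      _ ≤ L.toNNReal * ‖u - w‖ :=
          mul_le_mul_of_nonneg_right (Real.le_coe_toNNReal L) (norm_nonneg _)
  have hline : ∀ t : ℝ, HasDerivAt (fun t : ℝ => x + t • v) v t := fun t => by
    simpa using ((hasDerivAt_id t).smul_const v).const_add x
  have hderiv : ∀ t : ℝ, HasDerivAt (fun t : ℝ => Φ (x + t • v))
      (⟪gradient Φ (x + t • v), v⟫) t := by
    intro t
    have := (hdiff (x + t • v)).hasFDerivAt.comp_hasDerivAt t (hline t)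
    rw [← grad_apply']; exact this
  have hcont : Continuous (fun t : ℝ => ⟪gradient Φ (x + t • v), v⟫) :=
    (hgrad_cont.comp (continuous_const.add (continuous_id.smul continuous_const))).inner
      continuous_const
  have hcont2 : Continuous (fun t : ℝ => ⟪gradient Φ x, v⟫ + L * t * ‖v‖ ^ 2) := by fun_prop
  have hint : Φ (x + v) - Φ x = ∫ t in (0:ℝ)..1, ⟪gradient Φ (x + t • v), v⟫ := by
    have := intervalIntegral.integral_eq_sub_of_hasDerivAt
      (fun t _ => hderiv t) (hcont.intervalIntegrable 0 1)
    simp only [one_smul, zero_smul, add_zero] at this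
    rw [this]
  have hbound : (∫ t in (0:ℝ)..1, ⟪gradient Φ (x + t • v), v⟫)
      ≤ ∫ t in (0:ℝ)..1, (⟪gradient Φ x, v⟫ + L * t * ‖v‖ ^ 2) := by
    apply intervalIntegral.integral_mono_on zero_le_one
      (hcont.intervalIntegrable 0 1) (hcont2.intervalIntegrable 0 1)
    intro t ht
    have ht0 : 0 ≤ t := ht.1
    have hsub : ⟪gradient Φ (x + t • v), v⟫ - ⟪gradient Φ x, v⟫
        = ⟪gradient Φ (x + t • v) - gradient Φ x, v⟫ := by rw [inner_sub_left]
    have hcs : ⟪gradient Φ (x + t • v) - gradient Φ x, v⟫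
        ≤ ‖gradient Φ (x + t • v) - gradient Φ x‖ * ‖v‖ := real_inner_le_norm _ _
    have hlip' : ‖gradient Φ (x + t • v) - gradient Φ x‖ ≤ L * (t * ‖v‖) := by
      have := hlip (x + t • v) x
      simpa [norm_smul, abs_of_nonneg ht0] using this
    nlinarith [norm_nonneg v, mul_le_mul_of_nonneg_right hlip' (norm_nonneg v)]
  have hcalc : (∫ t in (0:ℝ)..1, (⟪gradient Φ x, v⟫ + L * t * ‖v‖ ^ 2))
      = ⟪gradient Φ x, v⟫ + L / 2 * ‖v‖ ^ 2 := by
    rw [intervalIntegral.integral_add (intervalIntegrable_const)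
      (((by fun_prop : Continuous fun t : ℝ => L * t * ‖v‖ ^ 2)).intervalIntegrable 0 1)]
    have h1 : (∫ t in (0:ℝ)..1, L * t * ‖v‖ ^ 2) = L * ‖v‖ ^ 2 * ∫ t in (0:ℝ)..1, t := by
      rw [← intervalIntegral.integral_const_mul]
      congr 1; ext t; ring
    rw [h1, integral_id]
    simp; ring
  linarith [hint ▸ hbound.trans_eq hcalc]

/-- one-step descent inequality for a gradient step with an inexact
gradient direction h:
Φ(x − αh) ≤ Φ(x) − (α/2 − α²L)‖∇Φ(x)‖² + (α/2 + α²L)‖∇Φ(x) − h‖². -/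
theorem statement_9 {m : ℕ} (Φ : EuclideanSpace ℝ (Fin m) → ℝ) (L α : ℝ)
    (hdiff : Differentiable ℝ Φ)
    (hlip : ∀ u w, ‖gradient Φ u - gradient Φ w‖ ≤ L * ‖u - w‖)
    (hα : 0 < α) (x h : EuclideanSpace ℝ (Fin m)) :
    Φ (x - α • h) ≤ Φ x - (α / 2 - α ^ 2 * L) * ‖gradient Φ x‖ ^ 2
      + (α / 2 + α ^ 2 * L) * ‖gradient Φ x - h‖ ^ 2 := by
  rcases Nat.eq_zero_or_pos m with hm | hm
  · subst hm
    have h1 : x - α • h = x := Subsingleton.elim _ _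
    have h2 : gradient Φ x = 0 := Subsingleton.elim _ _
    have h3 : (0 : EuclideanSpace ℝ (Fin 0)) - h = 0 := Subsingleton.elim _ _
    rw [h1, h2, h3]
    simp
  · have hL : 0 ≤ L := by
      have hl := hlip (EuclideanSpace.single (⟨0, hm⟩ : Fin m) (1:ℝ)) 0
      have h1 : ‖(EuclideanSpace.single (⟨0, hm⟩ : Fin m) (1:ℝ))
          - (0 : EuclideanSpace ℝ (Fin m))‖ = 1 := by
        simp [EuclideanSpace.norm_single]
      rw [h1, mul_one] at hl
      exact le_trans (norm_nonneg _) hl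
    have key := descent' Φ L hL hdiff hlip x (-(α • h))
    have hxe : x + -(α • h) = x - α • h := by abel
    rw [hxe] at key
    set g := gradient Φ x with hg
    have hinner : ⟪g, -(α • h)⟫ = -α * ⟪g, h⟫ := by
      rw [inner_neg_right, real_inner_smul_right]; ring
    have hnorm : ‖-(α • h)‖ ^ 2 = α ^ 2 * ‖h‖ ^ 2 := by
      rw [norm_neg, norm_smul]
      simp [abs_of_pos hα]; ring
    rw [hinner, hnorm] at key
    set q := ⟪g, g - h⟫ with hq
    have hqh : ⟪g, h⟫ = ‖g‖ ^ 2 - q := by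
      rw [hq, inner_sub_right, real_inner_self_eq_norm_sq]; ring
    have hhe : ‖h‖ ^ 2 = ‖g‖ ^ 2 - 2 * q + ‖g - h‖ ^ 2 := by
      have h2 : g - (g - h) = h := by abel
      have h3 := @norm_sub_sq_real (EuclideanSpace ℝ (Fin m)) _ _ g (g - h)
      rw [h2] at h3
      rw [hq]; linarith
    have hcs := abs_real_inner_le_norm g (g - h)
    rw [abs_le] at hcs
    obtain ⟨hcs2, hcs1⟩ := hcs
    rw [hqh, hhe] at key
    nlinarith [key, mul_le_mul_of_nonneg_left hcs1 hα.le,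
      mul_le_mul_of_nonneg_left hcs2 (mul_nonneg hL (sq_nonneg α)),
      mul_nonneg hα.le (sq_nonneg (‖g‖ - ‖g - h‖)),
      mul_nonneg (mul_nonneg hL (sq_nonneg α)) (sq_nonneg (‖g‖ - ‖g - h‖))]
end

section
/- Let Φ : ℝ^m → ℝ be differentiable and bounded below, with L-Lipschitz gradient (L > 0). Let Δ₀ ≥ 0, Ω ≥ 0, 0 ≤ δ ≤ 1, set α = 1/(8L), and suppose Ω (1 + 2 α L) δ ≤ 1/4. Let (x^k)_{k≥0} and (h^k)_{k≥0} satisfy x^{k+1} = x^k − α h^k and ‖h^k − ∇Φ(x^k)‖² ≤ δ [ (1/2)^k Δ₀ + Ω Σ_{j=0}^{k−1} (1/2)^{k−1−j} ‖∇Φ(x^j)‖² ] for every k ≥ 0. Then for every K ≥ 1, (1/K) Σ_{k=0}^{K−1} ‖∇Φ(x^k)‖² ≤ ( 64 L (Φ(x^0) − inf_x Φ(x)) + 5 Δ₀ ) / K. -/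
open RealInnerProductSpace

lemma descent_lemma {E : Type*} [NormedAddCommGroup E] [InnerProductSpace ℝ E]
    [CompleteSpace E] (Φ : E → ℝ) (L : ℝ) (hdiff : Differentiable ℝ Φ)
    (hlip : ∀ u w, ‖gradient Φ u - gradient Φ w‖ ≤ L * ‖u - w‖) (x d : E) :
    Φ (x + d) ≤ Φ x + ⟪gradient Φ x, d⟫ + L / 2 * ‖d‖ ^ 2 := by
  set G : ℝ → ℝ := fun t => Φ (x + t • d) - t * ⟪gradient Φ x, d⟫ - L / 2 * t ^ 2 * ‖d‖ ^ 2
    with hGdef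
  have hG : ∀ t : ℝ, HasDerivAt G
      (⟪gradient Φ (x + t • d), d⟫ - ⟪gradient Φ x, d⟫ - L * t * ‖d‖ ^ 2) t := by
    intro t
    have h1 : HasDerivAt (fun t : ℝ => x + t • d) d t := by
      simpa using ((hasDerivAt_id t).smul_const d).const_add x
    have h2 : HasDerivAt (fun t : ℝ => Φ (x + t • d)) ⟪gradient Φ (x + t • d), d⟫ t := by
      have := ((hdiff (x + t • d)).hasGradientAt.hasFDerivAt).comp_hasDerivAt t h1
      simpa [InnerProductSpace.toDual_apply_apply, Function.comp_def] using this
    have h3 : HasDerivAt (fun t : ℝ => t * ⟪gradient Φ x, d⟫) ⟪gradient Φ x, d⟫ t := by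
      simpa using (hasDerivAt_id t).mul_const (⟪gradient Φ x, d⟫)
    have h4 : HasDerivAt (fun t : ℝ => L / 2 * t ^ 2 * ‖d‖ ^ 2) (L * t * ‖d‖ ^ 2) t := by
      have := ((hasDerivAt_pow 2 t).const_mul (L / 2)).mul_const (‖d‖ ^ 2)
      convert this using 1
      · rfl
      · rfl
      rw [show (2:ℕ) - 1 = 1 from rfl, pow_one]
      push_cast
      ring
    exact (h2.sub h3).sub h4
  have hanti : AntitoneOn G (Set.Icc (0 : ℝ) 1) := by
    apply antitoneOn_of_deriv_nonpos (convex_Icc 0 1)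
    · exact fun t _ => (hG t).differentiableAt.continuousAt.continuousWithinAt
    · exact fun t _ => (hG t).differentiableAt.differentiableWithinAt
    · intro t ht
      rw [interior_Icc] at ht
      rw [(hG t).deriv]
      have h5 : ⟪gradient Φ (x + t • d) - gradient Φ x, d⟫ ≤ L * t * ‖d‖ ^ 2 := by
        calc ⟪gradient Φ (x + t • d) - gradient Φ x, d⟫
            ≤ ‖gradient Φ (x + t • d) - gradient Φ x‖ * ‖d‖ := real_inner_le_norm _ _
          _ ≤ (L * ‖(x + t • d) - x‖) * ‖d‖ := by
              have := hlip (x + t • d) x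
              have hd0 : (0:ℝ) ≤ ‖d‖ := norm_nonneg d
              nlinarith [norm_nonneg (gradient Φ (x + t • d) - gradient Φ x)]
          _ = L * t * ‖d‖ ^ 2 := by
              rw [add_sub_cancel_left, norm_smul, Real.norm_eq_abs, abs_of_pos ht.1]
              ring
      rw [inner_sub_left] at h5
      linarith
  have h01 : G 1 ≤ G 0 := hanti (by simp) (by norm_num) zero_le_one
  simp only [hGdef, one_smul, zero_smul, add_zero, one_mul, one_pow, zero_mul,
    mul_zero, sub_zero, zero_pow] at h01
  · linarith

lemma geom_conv_sum_le (c : ℕ → ℝ) (hc : ∀ k, 0 ≤ c k) (K : ℕ) :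
    ∑ k ∈ Finset.range K, (∑ j ∈ Finset.range k, (1 / 2 : ℝ) ^ (k - 1 - j) * c j) ≤
      2 * ∑ k ∈ Finset.range K, c k := by
  set D : ℕ → ℝ := fun k => ∑ j ∈ Finset.range k, (1 / 2 : ℝ) ^ (k - 1 - j) * c j with hD
  have hDnn : ∀ k, 0 ≤ D k := fun k =>
    Finset.sum_nonneg fun j _ => mul_nonneg (by positivity) (hc j)
  have hrec : ∀ k, D (k + 1) = c k + (1 / 2) * D k := by
    intro k
    have : ∀ j ∈ Finset.range k, (1 / 2 : ℝ) ^ (k + 1 - 1 - j) * c j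
        = (1 / 2) * ((1 / 2 : ℝ) ^ (k - 1 - j) * c j) := by
      intro j hj
      have hjk := Finset.mem_range.mp hj
      rw [show k + 1 - 1 - j = (k - 1 - j) + 1 by omega, pow_succ]
      ring
    simp only [hD]
    rw [Finset.sum_range_succ, Finset.sum_congr rfl this, ← Finset.mul_sum]
    simp
    ring
  have key : ∀ K : ℕ, (∑ k ∈ Finset.range K, D k) + 2 * D K ≤ 2 * ∑ k ∈ Finset.range K, c k := by
    intro K
    induction K with
    | zero => simp [hD]
    | succ n ih =>
      rw [Finset.sum_range_succ, Finset.sum_range_succ, hrec n]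
      linarith
  have := key K
  linarith [hDnn K]


set_option maxHeartbeats 1000000 in
/-- abstract Euclidean form of the deterministic convergence
theorem for RieBO: with α = 1/(8L), geometric-decay hypergradient error with
parameters δ, Ω, Δ₀ and Ω(1 + 2αL)δ ≤ 1/4, the average squared gradient norm
satisfies (1/K) Σ ‖∇Φ(x^k)‖² ≤ (64L(Φ(x⁰) − inf Φ) + 5Δ₀)/K. -/
theorem statement_17 {m : ℕ} (Φ : EuclideanSpace ℝ (Fin m) → ℝ)
    (L α δ Δ₀ Ω : ℝ) (hL : 0 < L)
    (hdiff : Differentiable ℝ Φ)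
    (hbdd : BddBelow (Set.range Φ))
    (hlip : ∀ u w, ‖gradient Φ u - gradient Φ w‖ ≤ L * ‖u - w‖)
    (hΔ₀ : 0 ≤ Δ₀) (hΩ : 0 ≤ Ω) (hδ0 : 0 ≤ δ) (hδ1 : δ ≤ 1)
    (hα : α = 1 / (8 * L))
    (hΩδ : Ω * (1 + 2 * α * L) * δ ≤ 1 / 4)
    (x h : ℕ → EuclideanSpace ℝ (Fin m))
    (hx : ∀ k, x (k + 1) = x k - α • h k)
    (herr : ∀ k, ‖h k - gradient Φ (x k)‖ ^ 2 ≤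
      δ * ((1 / 2 : ℝ) ^ k * Δ₀
        + Ω * ∑ j ∈ Finset.range k, (1 / 2 : ℝ) ^ (k - 1 - j) * ‖gradient Φ (x j)‖ ^ 2)) :
    ∀ K : ℕ, 1 ≤ K →
      (1 / (K : ℝ)) * ∑ k ∈ Finset.range K, ‖gradient Φ (x k)‖ ^ 2 ≤
        (64 * L * (Φ (x 0) - ⨅ z, Φ z) + 5 * Δ₀) / K := by
  intro K hK
  have hαpos : 0 < α := by rw [hα]; positivity
  have hαL : α * L = 1 / 8 := by rw [hα]; field_simp
  -- per-step descent inequality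
  have step : ∀ k : ℕ, α / 2 * ‖gradient Φ (x k)‖ ^ 2
      - α / 2 * ‖h k - gradient Φ (x k)‖ ^ 2 ≤ Φ (x k) - Φ (x (k + 1)) := by
    intro k
    have hdesc := descent_lemma Φ L hdiff hlip (x k) (-(α • h k))
    rw [← sub_eq_add_neg, ← hx k] at hdesc
    have hin : ⟪gradient Φ (x k), -(α • h k)⟫ = -(α * ⟪gradient Φ (x k), h k⟫) := by
      rw [inner_neg_right, real_inner_smul_right]
    have hnrm : ‖-(α • h k)‖ ^ 2 = α ^ 2 * ‖h k‖ ^ 2 := by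
      rw [norm_neg, norm_smul, Real.norm_eq_abs, mul_pow, sq_abs]
    rw [hin, hnrm] at hdesc
    have hexp : ‖h k - gradient Φ (x k)‖ ^ 2
        = ‖h k‖ ^ 2 - 2 * ⟪gradient Φ (x k), h k⟫ + ‖gradient Φ (x k)‖ ^ 2 := by
      rw [norm_sub_sq_real, real_inner_comm]
    rw [hexp]
    have hah : 0 ≤ α * ‖h k‖ ^ 2 := mul_nonneg hαpos.le (sq_nonneg _)
    nlinarith [sq_nonneg ‖h k‖, hdesc, hαL, hah, hL]
  set S := ∑ k ∈ Finset.range K, ‖gradient Φ (x k)‖ ^ 2 with hSdef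
  have hS0 : 0 ≤ S := Finset.sum_nonneg fun k _ => sq_nonneg _
  -- telescoping sum
  have hsum : α / 2 * S - α / 2 * (∑ k ∈ Finset.range K, ‖h k - gradient Φ (x k)‖ ^ 2)
      ≤ Φ (x 0) - Φ (x K) := by
    have h1 : ∑ k ∈ Finset.range K, (α / 2 * ‖gradient Φ (x k)‖ ^ 2
        - α / 2 * ‖h k - gradient Φ (x k)‖ ^ 2) ≤ ∑ k ∈ Finset.range K, (Φ (x k) - Φ (x (k + 1))) :=
      Finset.sum_le_sum fun k _ => step k
    rw [Finset.sum_range_sub' (fun k => Φ (x k)) K] at h1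
    rw [Finset.sum_sub_distrib, ← Finset.mul_sum, ← Finset.mul_sum] at h1
    exact h1
  -- error sum bound
  have hE : (∑ k ∈ Finset.range K, ‖h k - gradient Φ (x k)‖ ^ 2)
      ≤ δ * Δ₀ * 2 + δ * Ω * (2 * S) := by
    calc (∑ k ∈ Finset.range K, ‖h k - gradient Φ (x k)‖ ^ 2)
        ≤ ∑ k ∈ Finset.range K, (δ * Δ₀ * (1 / 2 : ℝ) ^ k
            + δ * Ω * ∑ j ∈ Finset.range k, (1 / 2 : ℝ) ^ (k - 1 - j) * ‖gradient Φ (x j)‖ ^ 2) := by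
          refine Finset.sum_le_sum fun k _ => ?_
          have := herr k
          linarith [this, (by ring : δ * ((1 / 2 : ℝ) ^ k * Δ₀
            + Ω * ∑ j ∈ Finset.range k, (1 / 2 : ℝ) ^ (k - 1 - j) * ‖gradient Φ (x j)‖ ^ 2)
            = δ * Δ₀ * (1 / 2 : ℝ) ^ k
            + δ * Ω * ∑ j ∈ Finset.range k, (1 / 2 : ℝ) ^ (k - 1 - j) * ‖gradient Φ (x j)‖ ^ 2)]
      _ = δ * Δ₀ * (∑ k ∈ Finset.range K, (1 / 2 : ℝ) ^ k)
          + δ * Ω * ∑ k ∈ Finset.range K,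
              (∑ j ∈ Finset.range k, (1 / 2 : ℝ) ^ (k - 1 - j) * ‖gradient Φ (x j)‖ ^ 2) := by
          rw [Finset.sum_add_distrib, ← Finset.mul_sum, ← Finset.mul_sum]
      _ ≤ δ * Δ₀ * 2 + δ * Ω * (2 * S) := by
          have hg2 := sum_geometric_two_le K
          have hds := geom_conv_sum_le (fun j => ‖gradient Φ (x j)‖ ^ 2)
            (fun j => sq_nonneg _) K
          have h1 : δ * Δ₀ * (∑ k ∈ Finset.range K, (1 / 2 : ℝ) ^ k) ≤ δ * Δ₀ * 2 :=
            mul_le_mul_of_nonneg_left hg2 (by positivity)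
          have h2 : δ * Ω * ∑ k ∈ Finset.range K,
              (∑ j ∈ Finset.range k, (1 / 2 : ℝ) ^ (k - 1 - j) * ‖gradient Φ (x j)‖ ^ 2)
              ≤ δ * Ω * (2 * S) :=
            mul_le_mul_of_nonneg_left hds (by positivity)
          linarith
  have hinfK : (⨅ z, Φ z) ≤ Φ (x K) := ciInf_le hbdd (x K)
  have hinf0 : (⨅ z, Φ z) ≤ Φ (x 0) := ciInf_le hbdd (x 0)
  have hΩδ5 : Ω * δ ≤ 1 / 5 := by
    have h54 : 1 + 2 * α * L = 5 / 4 := by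
      rw [hα]; field_simp; ring
    rw [h54] at hΩδ
    linarith
  -- combined inequality
  have hcomb : α / 2 * S - α / 2 * (δ * Δ₀ * 2 + δ * Ω * (2 * S)) ≤ Φ (x 0) - ⨅ z, Φ z := by
    have := mul_le_mul_of_nonneg_left hE (by positivity : (0:ℝ) ≤ α / 2)
    linarith
  have key : S / 16 - δ * Δ₀ / 8 - δ * Ω * S / 8 ≤ L * (Φ (x 0) - ⨅ z, Φ z) := by
    have h8 := mul_le_mul_of_nonneg_left hcomb hL.le
    have heq : L * (α / 2 * S - α / 2 * (δ * Δ₀ * 2 + δ * Ω * (2 * S)))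
        = S / 16 - δ * Δ₀ / 8 - δ * Ω * S / 8 := by
      linear_combination (S / 2 - δ * Δ₀ - δ * Ω * S) * hαL
    linarith [h8, heq.symm.le, heq.le]
  have hprod : δ * Ω * S ≤ 1 / 5 * S := by
    have hδΩ : δ * Ω ≤ 1 / 5 := by linarith [hΩδ5, (mul_comm Ω δ).symm.le]
    exact mul_le_mul_of_nonneg_right hδΩ hS0
  have hLD : 0 ≤ L * (Φ (x 0) - ⨅ z, Φ z) := mul_nonneg hL.le (by linarith)
  have hδΔ : δ * Δ₀ ≤ Δ₀ := by nlinarith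
  have hδΔ0 : 0 ≤ δ * Δ₀ := mul_nonneg hδ0 hΔ₀
  have hSle : S ≤ 64 * L * (Φ (x 0) - ⨅ z, Φ z) + 5 * Δ₀ := by linarith
  have hKpos : (0:ℝ) < K := by exact_mod_cast hK
  rw [one_div, inv_mul_eq_div, div_le_div_iff₀ hKpos hKpos]
  nlinarith [hSle, hKpos]
end
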